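/- arXiv:0905.3081 — 4 statements merged into one kernel-verified Lean document; each statement's English description precedes it below -/
import Mathlib

section
/- For every integer n ≥ 1 and every word u of length n over {a,b}, the number of binary trees with n+1 vertices whose canopy is u equals the number of lattice paths η (with unit north and east steps) that are weakly below the path ω_u. -/
/-- A binary tree: empty, or a root with a left and a right subtree. -/
inductive BinTree : Type
  | nil : BinTree
  | node : BinTree → BinTree → BinTree
  deriving DecidableEq

/-- Number of vertices of a binary tree. -/
def BinTree.size : BinTree → ℕ
  | .nil => 0
  | .node l r => l.size + r.size + 1

/-- Length (number of vertices) of the left branch. -/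
def BinTree.leftBranchLen : BinTree → ℕ
  | .nil => 0
  | .node l _ => l.leftBranchLen + 1

/-- Length (number of vertices) of the right branch. -/
def BinTree.rightBranchLen : BinTree → ℕ
  | .nil => 0
  | .node _ r => r.rightBranchLen + 1

/-- Word over {a,b} (a = `true`, b = `false`) reading the vertices in symmetric
(in-)order; a vertex contributes `true` iff it has a right child. -/
def BinTree.canopyFull : BinTree → List Bool
  | .nil => []
  | .node l r => l.canopyFull ++ (decide (r ≠ BinTree.nil)) :: r.canopyFull

/-- The canopy of a binary tree with `n` vertices: the word `u₁ … u_{n-1}` over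
{a = `true`, b = `false`} with `uᵢ = a` iff the `i`-th vertex in symmetric order
has a right child.  (The last vertex in symmetric order never has a right child,
so it is dropped.) -/
def BinTree.canopy (B : BinTree) : List Bool := B.canopyFull.dropLast

/-- A Catalan tableau of index `n`: a partition `λ₁ ≥ … ≥ λ_k` with `λ₁ = n - k`,
drawn right-justified inside the `k × (n-k)` rectangle (rows bottom to top, row `i`
having `lam i` cells, occupying columns `j` with `m - lam i ≤ j < m` where
`m = n - k`), filled with 0's (`false`) and 1's (`true`) such that every column
contains exactly one 1 and no 0 has both a 1 below it in its column and a 1 to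
its right in its row.  Entries outside the diagram are forced to `false`. -/
structure CatalanTableau (n : ℕ) where
  k : ℕ
  m : ℕ
  hk : 0 < k
  hkm : k + m = n
  lam : Fin k → ℕ
  lam_le : ∀ i, lam i ≤ m
  lam_first : lam ⟨0, hk⟩ = m
  lam_anti : ∀ i j : Fin k, i ≤ j → lam j ≤ lam i
  f : Fin k → Fin m → Bool
  f_outside : ∀ (i : Fin k) (j : Fin m), (j : ℕ) < m - lam i → f i j = false
  col_one : ∀ j : Fin m, ∃! i : Fin k, f i j = true
  no_bad : ∀ (i : Fin k) (j : Fin m), m - lam i ≤ (j : ℕ) → f i j = false →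
    ¬ ((∃ i' : Fin k, i' < i ∧ f i' j = true) ∧
       (∃ j' : Fin m, (j : ℕ) < (j' : ℕ) ∧ f i j' = true))

/-- The profile of a Catalan tableau: the NW border of its Ferrers diagram read
from the bottom-left corner of the rectangle to its top-right corner
(a = `true` for a north step, b = `false` for an east step), with the first
letter (always a north step) deleted. -/
def CatalanTableau.profile {n : ℕ} (T : CatalanTableau n) : List Bool :=
  ((List.finRange T.k).flatMap (fun i =>
    true :: List.replicate
      (T.lam i - (if h : (i : ℕ) + 1 < T.k then T.lam ⟨(i : ℕ) + 1, h⟩ else 0)) false)).tail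

/-- Number of 1's in the first (bottom) row of a Catalan tableau. -/
noncomputable def CatalanTableau.onesFirstRow {n : ℕ} (T : CatalanTableau n) : ℕ :=
  Nat.card {j : Fin T.m // T.f ⟨0, T.hk⟩ j = true}

/-- An entry is restricted if it is a 0 (in a cell of the diagram) lying above
some 1 in its column. -/
def CatalanTableau.Restricted {n : ℕ} (T : CatalanTableau n)
    (i : Fin T.k) (j : Fin T.m) : Prop :=
  T.m - T.lam i ≤ (j : ℕ) ∧ T.f i j = false ∧ ∃ i' : Fin T.k, i' < i ∧ T.f i' j = true

/-- Number of unrestricted rows (rows of the rectangle containing no restricted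
entry). -/
noncomputable def CatalanTableau.unrestrictedRows {n : ℕ} (T : CatalanTableau n) : ℕ :=
  Nat.card {i : Fin T.k // ∀ j : Fin T.m, ¬ T.Restricted i j}

/-- `weaklyBelow ω η`: the lattice paths coded by `ω`, `η` (a = `true` = north
step, b = `false` = east step, both starting at the origin) have the same
endpoints and `η` never passes strictly above `ω`. -/
def weaklyBelow (ω η : List Bool) : Prop :=
  η.length = ω.length ∧ η.count true = ω.count true ∧
    ∀ t : ℕ, (η.take t).count true ≤ (ω.take t).count true

/-- Heights at which the successive east steps of a path occur. -/
def eastHeightsAux : ℕ → List Bool → List ℕ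
  | _, [] => []
  | h, true :: w => eastHeightsAux (h + 1) w
  | h, false :: w => h :: eastHeightsAux h w

def eastHeights (w : List Bool) : List ℕ := eastHeightsAux 0 w

/-- Number of horizontal contacts of two paths: unit east edges traversed by
both paths. -/
def contacts (ω η : List Bool) : ℕ :=
  ((eastHeights ω).zip (eastHeights η)).countP (fun p => p.1 == p.2)

/-- Number of trailing north steps of a path. -/
def trailingNorth (w : List Bool) : ℕ := (w.reverse.takeWhile (· == true)).length

/-- Number of left edges, i.e. of vertices having a left child. -/
def BinTree.leftEdgeCount : BinTree → ℕ
  | .nil => 0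
  | .node l r => l.leftEdgeCount + r.leftEdgeCount + (if l = BinTree.nil then 0 else 1)

/-- Number of vertices having no right child. -/
def BinTree.noRightCount : BinTree → ℕ
  | .nil => 0
  | .node l r => l.noRightCount + r.noRightCount + (if r = BinTree.nil then 1 else 0)

/-- Symmetric-order traversal recording, for each vertex, whether it has a left
child, whether it has a right child, and its right height (the second argument
is the right height of the current root). -/
def BinTree.inorderAux : BinTree → ℕ → List (Bool × Bool × ℕ)
  | .nil, _ => []
  | .node l r, h =>
      BinTree.inorderAux l h ++
        (decide (l ≠ BinTree.nil), decide (r ≠ BinTree.nil), h) :: BinTree.inorderAux r (h + 1)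

def BinTree.inorder (B : BinTree) : List (Bool × Bool × ℕ) := B.inorderAux 0

/-- The sequence `ρ₁, …, ρ_m`: right heights of the parents of the left edges,
the left edges being ordered by their parents in symmetric order. -/
def BinTree.rhoList (B : BinTree) : List ℕ :=
  (B.inorder.filter (fun v => v.1)).map (fun v => v.2.2)

def hsAux : List (Bool × Bool × ℕ) → ℕ → List ℕ
  | [], _ => []
  | v :: rest, c => if v.2.1 then hsAux rest (c + 1) else c :: hsAux rest c

/-- The sequence `h₁, …, h_m`: for each vertex with no right child (in symmetric
order, excluding the last vertex in symmetric order), the number of vertices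
preceding it in symmetric order that have a right child. -/
def BinTree.hList (B : BinTree) : List ℕ := (hsAux B.inorder 0).dropLast

/-- Leaves of the completion `γ(B)` in symmetric order, each recorded as `true`
if it is a left child of its parent and `false` if it is a right child; the
boolean argument records whether the current subtree sits as a left child. -/
def BinTree.gammaLeavesAux : BinTree → Bool → List Bool
  | .nil, isLeft => [isLeft]
  | .node l r, _ => BinTree.gammaLeavesAux l true ++ BinTree.gammaLeavesAux r false

/-- The word of the leaves of the complete binary tree `γ(B)` in symmetric order
(a = `true` for a left child, b = `false` for a right child). -/
def BinTree.leafWord : BinTree → List Bool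
  | .nil => []
  | .node l r => BinTree.gammaLeavesAux l true ++ BinTree.gammaLeavesAux r false


/-! ### Auxiliary development for the proof -/

namespace BinTree

def ins : BinTree → ℕ → BinTree
  | t, 0 => .node t .nil
  | .nil, _+1 => .node .nil .nil
  | .node l r, i+1 => .node l (ins r i)

def del : BinTree → BinTree × ℕ
  | .nil => (.nil, 0)
  | .node l .nil => (l, 0)
  | .node l (.node r1 r2) =>
      let p := del (.node r1 r2); (.node l p.1, p.2 + 1)

lemma ins_ne_nil (B : BinTree) (i : ℕ) : ins B i ≠ nil := by
  cases B <;> cases i <;> simp [ins]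

lemma rbl_pos_iff (B : BinTree) : 0 < B.rightBranchLen ↔ B ≠ nil := by
  cases B <;> simp [rightBranchLen]

lemma size_pos_iff (B : BinTree) : 0 < B.size ↔ B ≠ nil := by
  cases B <;> simp [size]

lemma size_ins (B : BinTree) (i : ℕ) (h : i ≤ B.rightBranchLen) :
    (ins B i).size = B.size + 1 := by
  induction B generalizing i with
  | nil =>
    obtain rfl : i = 0 := Nat.le_zero.mp (by simpa [rightBranchLen] using h)
    simp [ins, size]
  | node l r ihl ihr =>
    cases i with
    | zero => simp [ins, size]
    | succ i =>
      simp only [rightBranchLen] at h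
      simp [ins, size, ihr i (by omega)]
      omega

lemma rbl_ins (B : BinTree) (i : ℕ) (h : i ≤ B.rightBranchLen) :
    (ins B i).rightBranchLen = i + 1 := by
  induction B generalizing i with
  | nil =>
    obtain rfl : i = 0 := Nat.le_zero.mp (by simpa [rightBranchLen] using h)
    simp [ins, rightBranchLen]
  | node l r ihl ihr =>
    cases i with
    | zero => simp [ins, rightBranchLen]
    | succ i =>
      simp only [rightBranchLen] at h
      simp [ins, rightBranchLen, ihr i (by omega)]

lemma length_canopyFull (B : BinTree) : B.canopyFull.length = B.size := by
  induction B with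
  | nil => simp [canopyFull, size]
  | node l r ihl ihr => simp [canopyFull, size, ihl, ihr]; omega

lemma canopyFull_eq_nil_iff (B : BinTree) : B.canopyFull = [] ↔ B = nil := by
  cases B with
  | nil => simp [canopyFull]
  | node l r => simp [canopyFull]

lemma exists_canopyFull (B : BinTree) (h : B ≠ nil) :
    ∃ v, B.canopyFull = v ++ [false] := by
  induction B with
  | nil => simp at h
  | node l r ihl ihr =>
    by_cases hr : r = nil
    · subst hr; exact ⟨l.canopyFull, by simp [canopyFull]⟩
    · obtain ⟨v, hv⟩ := ihr hr
      exact ⟨l.canopyFull ++ true :: v, by simp [canopyFull, hv, hr]⟩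

lemma canopyFull_ends_false (B : BinTree) (h : B ≠ nil) :
    B.canopyFull = B.canopy ++ [false] := by
  obtain ⟨v, hv⟩ := exists_canopyFull B h
  rw [canopy, hv, List.dropLast_concat]

lemma canopyFull_ins_lt (B : BinTree) (i : ℕ) (h : i < B.rightBranchLen) :
    (ins B i).canopyFull = B.canopyFull ++ [false] := by
  induction B generalizing i with
  | nil => simp [rightBranchLen] at h
  | node l r ihl ihr =>
    cases i with
    | zero => simp [ins, canopyFull]
    | succ i =>
      simp only [rightBranchLen] at h
      have hr : r ≠ nil := by
        rw [← rbl_pos_iff]; omega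
      simp [ins, canopyFull, ihr i (by omega), ins_ne_nil, hr]

lemma canopyFull_ins_eq (B : BinTree) (h : B ≠ nil) :
    (ins B B.rightBranchLen).canopyFull = B.canopy ++ [true, false] := by
  induction B with
  | nil => simp at h
  | node l r ihl ihr =>
    by_cases hr : r = nil
    · subst hr
      show (node l (ins nil 0)).canopyFull = _
      simp [ins, canopyFull, canopy]
    · obtain ⟨v, hv⟩ := exists_canopyFull r hr
      have h2 : r.canopy = v := by rw [canopy, hv, List.dropLast_concat]
      show (node l (ins r r.rightBranchLen)).canopyFull = _
      simp only [canopyFull, ihr hr, canopy, hv, ne_eq, hr, not_false_iff,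
        decide_true, List.dropLast_concat]
      rw [show l.canopyFull ++ true :: (v ++ [false]) =
        (l.canopyFull ++ true :: v) ++ [false] by simp, List.dropLast_concat]
      simp [ins_ne_nil]

lemma del_ins (B : BinTree) (i : ℕ) (h : i ≤ B.rightBranchLen) :
    del (ins B i) = (B, i) := by
  induction B generalizing i with
  | nil =>
    obtain rfl : i = 0 := Nat.le_zero.mp (by simpa [rightBranchLen] using h)
    simp [ins, del]
  | node l r ihl ihr =>
    cases i with
    | zero => simp [ins, del]
    | succ i =>
      simp only [rightBranchLen] at h
      have h' := ihr i (by omega)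
      have hne := ins_ne_nil r i
      cases hins : ins r i with
      | nil => exact absurd hins hne
      | node a b =>
        rw [hins] at h'
        simp [ins, hins, del, h']

lemma ins_del (B : BinTree) (h : B ≠ nil) :
    ins (del B).1 (del B).2 = B ∧ (del B).2 ≤ (del B).1.rightBranchLen ∧
      B.size = (del B).1.size + 1 := by
  induction B with
  | nil => simp at h
  | node l r ihl ihr =>
    cases r with
    | nil => simp [del, ins, size]
    | node r1 r2 =>
      obtain ⟨h1, h2, h3⟩ := ihr (by simp)
      refine ⟨?_, ?_, ?_⟩
      · simp [del, ins, h1]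
      · simp [del, rightBranchLen]; omega
      · simp [del, size] at h3 ⊢; omega

lemma canopy_ins_lt (B : BinTree) (h : B ≠ nil) (i : ℕ) (hi : i < B.rightBranchLen) :
    (ins B i).canopy = B.canopy ++ [false] := by
  rw [canopy, canopyFull_ins_lt B i hi, List.dropLast_concat, canopyFull_ends_false B h]

lemma canopy_ins_eq (B : BinTree) (h : B ≠ nil) :
    (ins B B.rightBranchLen).canopy = B.canopy ++ [true] := by
  rw [canopy, canopyFull_ins_eq B h,
    show B.canopy ++ [true, false] = (B.canopy ++ [true]) ++ [false] by simp,
    List.dropLast_concat]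

lemma eq_nil_of_size_zero (B : BinTree) (h : B.size = 0) : B = nil := by
  cases B with
  | nil => rfl
  | node l r => simp [size] at h

lemma eq_leaf_of_size_one (B : BinTree) (h : B.size = 1) : B = node nil nil := by
  cases B with
  | nil => simp [size] at h
  | node l r =>
    simp only [size] at h
    rw [eq_nil_of_size_zero l (by omega), eq_nil_of_size_zero r (by omega)]

lemma length_canopy (B : BinTree) : B.canopy.length = B.size - 1 := by
  rw [canopy, List.length_dropLast, length_canopyFull]

lemma del_spec (B : BinTree) (h : 2 ≤ B.size) :
    B = ins (del B).1 (del B).2 ∧ (del B).2 ≤ (del B).1.rightBranchLen ∧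
      B.size = (del B).1.size + 1 ∧ (del B).1 ≠ nil ∧
      (((del B).2 < (del B).1.rightBranchLen ∧ B.canopy = (del B).1.canopy ++ [false]) ∨
       ((del B).2 = (del B).1.rightBranchLen ∧ B.canopy = (del B).1.canopy ++ [true])) := by
  have hne : B ≠ nil := by
    intro hB; rw [hB] at h; simp [size] at h
  obtain ⟨h1, h2, h3⟩ := ins_del B hne
  have hne' : (del B).1 ≠ nil := by
    rw [← size_pos_iff]; omega
  refine ⟨h1.symm, h2, h3, hne', ?_⟩
  rcases lt_or_eq_of_le h2 with hlt | heq
  · refine Or.inl ⟨hlt, ?_⟩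
    have hc := canopy_ins_lt (del B).1 hne' (del B).2 hlt
    rw [h1] at hc; exact hc
  · refine Or.inr ⟨heq, ?_⟩
    have hc := canopy_ins_eq (del B).1 hne'
    rw [← heq, h1] at hc; exact hc

end BinTree

namespace PathsAux

def insF (η : List Bool) (s : ℕ) : List Bool :=
  η.take (η.length - s) ++ false :: List.replicate s true

def InsF (η' : List Bool) (s : ℕ) (η : List Bool) : Prop :=
  ∃ β, η' = β ++ List.replicate s true ∧ η = β ++ false :: List.replicate s true

lemma takeWhile_rep (s : ℕ) (z : List Bool) :
    List.takeWhile (· == true) (List.replicate s true ++ z) =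
      List.replicate s true ++ List.takeWhile (· == true) z := by
  induction s with
  | zero => simp
  | succ s ih => simp [List.replicate_succ, ih]

lemma tn_append_rep (γ : List Bool) (s : ℕ) :
    trailingNorth (γ ++ List.replicate s true) = s + trailingNorth γ := by
  simp [trailingNorth, List.reverse_append, takeWhile_rep]

lemma tn_append_false (γ : List Bool) : trailingNorth (γ ++ [false]) = 0 := by
  simp [trailingNorth, List.reverse_append]

lemma tn_append_true (γ : List Bool) : trailingNorth (γ ++ [true]) = trailingNorth γ + 1 := by
  have := tn_append_rep γ 1
  simpa [Nat.add_comm] using this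

lemma tn_decomp (η : List Bool) :
    ∃ β, η = β ++ List.replicate (trailingNorth η) true ∧
      β.length + trailingNorth η = η.length := by
  have h1 : η.reverse.takeWhile (· == true) = List.replicate (trailingNorth η) true :=
    List.eq_replicate_iff.mpr ⟨rfl, fun b hb => by
      have h5 := List.mem_takeWhile_imp (p := (· == true)) hb
      exact eq_of_beq h5⟩
  refine ⟨(η.reverse.dropWhile (· == true)).reverse, ?_, ?_⟩
  · have h2 := congrArg List.reverse (List.takeWhile_append_dropWhile (p := (· == true)) (l := η.reverse))
    rw [List.reverse_append, h1, List.reverse_replicate, List.reverse_reverse] at h2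
    exact h2.symm
  · have h3 := congrArg List.length (List.takeWhile_append_dropWhile (p := (· == true)) (l := η.reverse))
    rw [List.length_append, List.length_reverse] at h3
    have h4 : (η.reverse.takeWhile (· == true)).length = trailingNorth η := rfl
    rw [List.length_reverse]
    omega

lemma exists_false_decomp (η : List Bool) (h : η.count true < η.length) :
    ∃ γ, η = γ ++ false :: List.replicate (trailingNorth η) true := by
  obtain ⟨β, hβ, hlen⟩ := tn_decomp η
  rcases List.eq_nil_or_concat β with rfl | ⟨γ, b, hb⟩
  · exfalso
    rw [List.nil_append] at hβ
    rw [hβ, List.count_replicate_self] at h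
    rw [hβ, List.length_replicate] at h
    simp at hlen
    omega
  · rw [List.concat_eq_append] at hb
    subst hb
    cases b with
    | true =>
      exfalso
      have heq : η = γ ++ List.replicate (trailingNorth η + 1) true := by
        conv_lhs => rw [hβ]
        rw [List.append_assoc, List.replicate_succ]
        rfl
      have h2 := tn_append_rep γ (trailingNorth η + 1)
      rw [← heq] at h2
      omega
    | false =>
      refine ⟨γ, ?_⟩
      conv_lhs => rw [hβ]
      rw [List.append_assoc]
      rfl

lemma take_sub {η : List Bool} (β : List Bool) (k s : ℕ)
    (hβ : η = β ++ List.replicate k true) (hs : s ≤ k) :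
    η.take (η.length - s) = β ++ List.replicate (k - s) true := by
  subst hβ
  have hsplit : β ++ List.replicate k true =
      (β ++ List.replicate (k - s) true) ++ List.replicate s true := by
    rw [List.append_assoc, List.replicate_append_replicate]
    congr 2
    omega
  rw [hsplit, List.take_left']
  simp only [List.length_append, List.length_replicate]
  omega

lemma insF_spec (η : List Bool) (s : ℕ) (hs : s ≤ trailingNorth η) :
    InsF η s (insF η s) := by
  obtain ⟨β, hβ, hlen⟩ := tn_decomp η
  refine ⟨β ++ List.replicate (trailingNorth η - s) true, ?_, ?_⟩
  · rw [List.append_assoc, List.replicate_append_replicate,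
      show trailingNorth η - s + s = trailingNorth η by omega]
    exact hβ
  · rw [insF, take_sub β (trailingNorth η) s hβ hs]

lemma InsF_unique {η' η₁ η₂ : List Bool} {s : ℕ} (h1 : InsF η' s η₁) (h2 : InsF η' s η₂) :
    η₁ = η₂ := by
  obtain ⟨β₁, hb1, he1⟩ := h1
  obtain ⟨β₂, hb2, he2⟩ := h2
  have hb : β₁ = β₂ := List.append_cancel_right (hb1.symm.trans hb2)
  rw [he1, he2, hb]

lemma InsF_left_inj {η'₁ η'₂ η : List Bool} {s : ℕ} (h1 : InsF η'₁ s η) (h2 : InsF η'₂ s η) :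
    η'₁ = η'₂ := by
  obtain ⟨β₁, hb1, he1⟩ := h1
  obtain ⟨β₂, hb2, he2⟩ := h2
  have hb : β₁ = β₂ := List.append_cancel_right (he1.symm.trans he2 :)
  rw [hb1, hb2, hb]

lemma InsF_tn {η' η : List Bool} {s : ℕ} (h : InsF η' s η) : trailingNorth η = s := by
  obtain ⟨β, _, he⟩ := h
  rw [he, show β ++ false :: List.replicate s true =
    (β ++ [false]) ++ List.replicate s true by simp,
    tn_append_rep, tn_append_false]
  omega

lemma InsF_exists_rev (η : List Bool) (h : η.count true < η.length) :
    ∃ η' s, s ≤ trailingNorth η' ∧ InsF η' s η := by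
  obtain ⟨γ, hγ⟩ := exists_false_decomp η h
  refine ⟨γ ++ List.replicate (trailingNorth η) true, trailingNorth η, ?_, γ, rfl, hγ⟩
  rw [tn_append_rep]
  omega

lemma count_take_append_false (u : List Bool) (t : ℕ) :
    ((u ++ [false]).take t).count true = (u.take t).count true := by
  rw [List.take_append, List.count_append]
  have : (([false] : List Bool).take (t - u.length)).count true ≤ ([false] : List Bool).count true :=
    (List.take_sublist _ _).count_le _
  simp at this
  omega

lemma count_take_mono (l : List Bool) {t₁ t₂ : ℕ} (h : t₁ ≤ t₂) :
    ((l.take t₁).count true) ≤ (l.take t₂).count true := by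
  rw [show l.take t₁ = (l.take t₂).take t₁ by rw [List.take_take, Nat.min_eq_left h]]
  exact (List.take_sublist _ _).count_le _

lemma count_take_lb (l : List Bool) (t : ℕ) :
    l.count true ≤ (l.take t).count true + (l.length - t) := by
  conv_lhs => rw [← List.take_append_drop t l]
  rw [List.count_append]
  have h1 : (l.drop t).count true ≤ (l.drop t).length := List.count_le_length
  rw [List.length_drop] at h1
  omega

lemma weaklyBelow_nil (η : List Bool) : weaklyBelow [] η ↔ η = [] := by
  constructor
  · rintro ⟨h, -, -⟩
    exact List.length_eq_zero_iff.mp h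
  · rintro rfl
    exact ⟨rfl, rfl, fun t => le_refl _⟩

lemma below_append_true {u η' : List Bool} (h : weaklyBelow u η') :
    weaklyBelow (u ++ [true]) (η' ++ [true]) := by
  obtain ⟨hl, hc, hp⟩ := h
  refine ⟨by simp [hl], by simp [hc], fun t => ?_⟩
  rw [List.take_append, List.take_append,
    List.count_append, List.count_append, hl]
  exact Nat.add_le_add_right (hp t) _

lemma below_of_append_true {u η : List Bool} (h : weaklyBelow (u ++ [true]) η) :
    ∃ η', η = η' ++ [true] ∧ weaklyBelow u η' := by
  obtain ⟨hl, hc, hp⟩ := h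
  simp at hl hc
  have hne : η ≠ [] := by
    intro h0; rw [h0] at hl; simp at hl
  have hdec : η = η.dropLast ++ [η.getLast hne] := (List.dropLast_append_getLast hne).symm
  have hdl : η.dropLast = η.take u.length := by
    rw [List.dropLast_eq_take, hl]; simp
  have hcount : (η.take u.length).count true ≤ u.count true := by
    have := hp u.length
    rwa [List.take_left' rfl] at this
  have hlast : η.getLast hne = true := by
    by_contra hlast
    have hlast' : η.getLast hne = false := by
      cases hη : η.getLast hne
      · rfl
      · exact absurd hη hlast
    have : η.count true = (η.take u.length).count true := by
      conv_lhs => rw [hdec]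
      rw [List.count_append, hdl, hlast']
      simp
    omega
  refine ⟨η.dropLast, by rw [← hlast]; exact hdec, ?_, ?_, fun t => ?_⟩
  · rw [List.length_dropLast, hl]
    simp
  · have : η.count true = η.dropLast.count true + 1 := by
      conv_lhs => rw [hdec, List.count_append, hlast]
      simp
    omega
  · rcases le_or_gt t u.length with ht | ht
    · rw [hdl, List.take_take, Nat.min_eq_left ht]
      have := hp t
      rwa [List.take_append, Nat.sub_eq_zero_of_le ht, List.take_zero,
        List.append_nil] at this
    · rw [List.take_of_length_le (by rw [List.length_dropLast, hl]; simp; omega),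
        List.take_of_length_le (by omega)]
      have : η.count true = η.dropLast.count true + 1 := by
        conv_lhs => rw [hdec, List.count_append, hlast]; simp
      omega

lemma below_insF {u η' η : List Bool} {s : ℕ} (h : weaklyBelow u η') (hI : InsF η' s η) :
    weaklyBelow (u ++ [false]) η := by
  obtain ⟨hl, hc, hp⟩ := h
  obtain ⟨β, hb, he⟩ := hI
  have hbl : β.length + s = η'.length := by rw [hb]; simp
  refine ⟨?_, ?_, fun t => ?_⟩
  · rw [he]
    simp only [List.length_append, List.length_cons, List.length_replicate, List.length_nil]
    omega
  · have hc2 : List.count true η = List.count true η' := by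
      rw [he, hb]; simp
    rw [hc2, hc]; simp
  · rw [count_take_append_false]
    rcases le_or_gt t β.length with ht | ht
    · have h1 : η.take t = η'.take t := by
        rw [he, hb, List.take_append, List.take_append,
          Nat.sub_eq_zero_of_le ht]
        simp
      rw [h1]; exact hp t
    · have e1 : (false :: List.replicate s true).take (t - β.length) =
          false :: List.replicate ((t - β.length - 1) ⊓ s) true := by
        rw [show t - β.length = (t - β.length - 1) + 1 by omega]
        simp [List.take_replicate]
      have lhs : (η.take t).count true = β.count true + ((t - 1 - β.length) ⊓ s) := by
        rw [he, List.take_append, List.take_of_length_le (le_of_lt ht),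
          List.count_append, e1, show t - β.length - 1 = t - 1 - β.length by omega]
        simp
      have rhs : (η'.take (t - 1)).count true = β.count true + ((t - 1 - β.length) ⊓ s) := by
        rw [hb, List.take_append,
          List.take_of_length_le (show β.length ≤ t - 1 by omega),
          List.count_append, List.take_replicate]
        simp
      rw [lhs, ← rhs]
      exact le_trans (hp (t - 1)) (count_take_mono u (by omega))

lemma below_of_append_false {u η : List Bool} (h : weaklyBelow (u ++ [false]) η) :
    ∃ η' s, s ≤ trailingNorth η' ∧ InsF η' s η ∧ weaklyBelow u η' := by
  obtain ⟨hl, hc, hp⟩ := h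
  simp at hl hc
  have hcnt : η.count true < η.length := by
    have : u.count true ≤ u.length := List.count_le_length
    omega
  obtain ⟨γ, hγ⟩ := exists_false_decomp η hcnt
  set s := trailingNorth η with hs
  refine ⟨γ ++ List.replicate s true, s, by rw [tn_append_rep]; omega, ⟨γ, rfl, hγ⟩, ?_, ?_, fun t => ?_⟩
  · have := congrArg List.length hγ
    simp at this
    simp
    omega
  · have := congrArg (List.count true) hγ
    simp at this
    simp
    omega
  · have hγl : γ.length + s + 1 = η.length := by
      have := congrArg List.length hγ; simp at this; omega
    rcases le_or_gt t γ.length with ht | ht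
    · have h1 : (γ ++ List.replicate s true).take t = η.take t := by
        rw [hγ, List.take_append, List.take_append,
          Nat.sub_eq_zero_of_le ht]
        simp
      rw [h1]
      have := hp t
      rwa [count_take_append_false] at this
    · have h2 : ((γ ++ List.replicate s true).take t).count true =
          γ.count true + ((t - γ.length) ⊓ s) := by
        rw [List.take_append, List.take_of_length_le (le_of_lt ht),
          List.count_append, List.take_replicate]
        simp
      rw [h2]
      have hcγ : γ.count true + s = u.count true := by
        have := congrArg (List.count true) hγ; simp at this; omega
      rcases le_or_gt u.length t with hut | hut
      · rw [List.take_of_length_le hut]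
        have : (t - γ.length) ⊓ s ≤ s := Nat.min_le_right _ _
        omega
      · have hlb := count_take_lb u t
        have : (t - γ.length) ⊓ s ≤ t - γ.length := Nat.min_le_left _ _
        omega

lemma insF_tn (η : List Bool) (s : ℕ) (hs : s ≤ trailingNorth η) :
    trailingNorth (insF η s) = s := InsF_tn (insF_spec η s hs)

end PathsAux

open PathsAux in
lemma step_data (u : List Bool) (x : Bool) (B : BinTree)
    (h1 : B.size = (u ++ [x]).length + 1) (h2 : B.canopy = u ++ [x]) :
    (BinTree.del B).1.size = u.length + 1 ∧ (BinTree.del B).1.canopy = u ∧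
      B = BinTree.ins (BinTree.del B).1 (BinTree.del B).2 ∧
      ((x = false ∧ (BinTree.del B).2 < (BinTree.del B).1.rightBranchLen) ∨
       (x = true ∧ (BinTree.del B).2 = (BinTree.del B).1.rightBranchLen)) := by
  have hs2 : 2 ≤ B.size := by rw [h1]; simp
  obtain ⟨e1, e2, e3, e4, e5⟩ := BinTree.del_spec B hs2
  have hsz : (BinTree.del B).1.size = u.length + 1 := by
    simp only [List.length_append, List.length_cons, List.length_nil] at h1
    omega
  rcases e5 with ⟨hlt, hcan⟩ | ⟨heq, hcan⟩
  · rw [h2] at hcan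
    have hlen : u.length = (BinTree.del B).1.canopy.length := by
      rw [BinTree.length_canopy]
      omega
    obtain ⟨hu, hx⟩ := List.append_inj hcan hlen
    have hx' : x = false := by simpa using hx
    exact ⟨hsz, hu.symm, e1, Or.inl ⟨hx', hlt⟩⟩
  · rw [h2] at hcan
    have hlen : u.length = (BinTree.del B).1.canopy.length := by
      rw [BinTree.length_canopy]
      omega
    obtain ⟨hu, hx⟩ := List.append_inj hcan hlen
    have hx' : x = true := by simpa using hx
    exact ⟨hsz, hu.symm, e1, Or.inr ⟨hx', heq⟩⟩

open PathsAux in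
lemma main_bij (u : List Bool) :
    ∃ f : {B : BinTree // B.size = u.length + 1 ∧ B.canopy = u} →
        {η : List Bool // weaklyBelow u η},
      Function.Bijective f ∧
        ∀ Bp, Bp.val.rightBranchLen = trailingNorth (f Bp).val + 1 := by
  induction u using List.reverseRecOn with
  | nil =>
    refine ⟨fun _ => ⟨[], (weaklyBelow_nil []).mpr rfl⟩, ⟨?_, ?_⟩, ?_⟩
    · intro B₁ B₂ _
      apply Subtype.ext
      have h1 := BinTree.eq_leaf_of_size_one B₁.val (by simpa using B₁.2.1)
      have h2 := BinTree.eq_leaf_of_size_one B₂.val (by simpa using B₂.2.1)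
      rw [h1, h2]
    · intro η
      refine ⟨⟨BinTree.node .nil .nil,
        by constructor <;> simp [BinTree.size, BinTree.canopy, BinTree.canopyFull]⟩, ?_⟩
      apply Subtype.ext
      exact ((weaklyBelow_nil η.val).mp η.2).symm
    · intro Bp
      have h1 := BinTree.eq_leaf_of_size_one Bp.val (by simpa using Bp.2.1)
      rw [h1]
      simp [BinTree.rightBranchLen, trailingNorth]
  | append_singleton u x ih =>
    obtain ⟨f, ⟨finj, fsurj⟩, fstat⟩ := ih
    have fcongr : ∀ X Y : {B : BinTree // B.size = u.length + 1 ∧ B.canopy = u},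
        X.val = Y.val → f X = f Y := fun X Y h => congrArg f (Subtype.ext h)
    cases x with
    | true =>
      have key : ∀ Bp : {B : BinTree //
          B.size = (u ++ [true]).length + 1 ∧ B.canopy = u ++ [true]},
          (BinTree.del Bp.val).1.size = u.length + 1 ∧ (BinTree.del Bp.val).1.canopy = u ∧
            Bp.val = BinTree.ins (BinTree.del Bp.val).1 (BinTree.del Bp.val).2 ∧
            (BinTree.del Bp.val).2 = (BinTree.del Bp.val).1.rightBranchLen := by
        intro Bp
        obtain ⟨a, b, c, d⟩ := step_data u true Bp.val Bp.2.1 Bp.2.2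
        rcases d with ⟨hf, -⟩ | ⟨-, hd⟩
        · exact absurd hf (by simp)
        · exact ⟨a, b, c, hd⟩
      refine ⟨fun Bp =>
        ⟨(f ⟨(BinTree.del Bp.val).1, (key Bp).1, (key Bp).2.1⟩).val ++ [true],
          below_append_true (f ⟨(BinTree.del Bp.val).1, (key Bp).1, (key Bp).2.1⟩).2⟩,
        ⟨?_, ?_⟩, ?_⟩
      · intro B₁ B₂ hEq
        have hv := congrArg Subtype.val hEq
        simp only at hv
        have hv2 := List.append_cancel_right hv
        have harg := finj (Subtype.ext hv2)
        have hd1 : (BinTree.del B₁.val).1 = (BinTree.del B₂.val).1 :=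
          congrArg Subtype.val harg
        have hd2 : (BinTree.del B₁.val).2 = (BinTree.del B₂.val).2 := by
          rw [(key B₁).2.2.2, (key B₂).2.2.2, hd1]
        apply Subtype.ext
        rw [(key B₁).2.2.1, (key B₂).2.2.1, hd1, hd2]
      · intro ηp
        obtain ⟨η', hη, hb'⟩ := below_of_append_true ηp.2
        obtain ⟨B'p, hB'⟩ := fsurj ⟨η', hb'⟩
        have hne : B'p.val ≠ BinTree.nil := by
          rw [← BinTree.size_pos_iff, B'p.2.1]; omega
        have hdel := BinTree.del_ins B'p.val B'p.val.rightBranchLen le_rfl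
        have hval : (BinTree.del (BinTree.ins B'p.val B'p.val.rightBranchLen)).1 = B'p.val := by
          rw [hdel]
        refine ⟨⟨BinTree.ins B'p.val B'p.val.rightBranchLen, ?_, ?_⟩, ?_⟩
        · rw [BinTree.size_ins _ _ le_rfl, B'p.2.1]; simp
        · rw [BinTree.canopy_ins_eq _ hne, B'p.2.2]
        · apply Subtype.ext
          simp only
          rw [fcongr _ B'p hval, hB', hη]
      · intro Bp
        have h1 := (key Bp).2.2.1
        have h2 := (key Bp).2.2.2
        have h3 : (BinTree.del Bp.val).1.rightBranchLen =
            trailingNorth (f ⟨(BinTree.del Bp.val).1, (key Bp).1, (key Bp).2.1⟩).val + 1 :=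
          fstat ⟨(BinTree.del Bp.val).1, (key Bp).1, (key Bp).2.1⟩
        simp only
        rw [tn_append_true]
        conv_lhs => rw [h1]
        rw [BinTree.rbl_ins _ _ (le_of_eq h2)]
        omega
    | false =>
      have key : ∀ Bp : {B : BinTree //
          B.size = (u ++ [false]).length + 1 ∧ B.canopy = u ++ [false]},
          (BinTree.del Bp.val).1.size = u.length + 1 ∧ (BinTree.del Bp.val).1.canopy = u ∧
            Bp.val = BinTree.ins (BinTree.del Bp.val).1 (BinTree.del Bp.val).2 ∧
            (BinTree.del Bp.val).2 < (BinTree.del Bp.val).1.rightBranchLen := by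
        intro Bp
        obtain ⟨a, b, c, d⟩ := step_data u false Bp.val Bp.2.1 Bp.2.2
        rcases d with ⟨-, hd⟩ | ⟨hf, -⟩
        · exact ⟨a, b, c, hd⟩
        · exact absurd hf (by simp)
      have hle : ∀ Bp : {B : BinTree //
          B.size = (u ++ [false]).length + 1 ∧ B.canopy = u ++ [false]},
          (BinTree.del Bp.val).2 ≤ trailingNorth
            (f ⟨(BinTree.del Bp.val).1, (key Bp).1, (key Bp).2.1⟩).val := by
        intro Bp
        have h5 : (BinTree.del Bp.val).1.rightBranchLen =
            trailingNorth (f ⟨(BinTree.del Bp.val).1, (key Bp).1, (key Bp).2.1⟩).val + 1 :=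
          fstat ⟨(BinTree.del Bp.val).1, (key Bp).1, (key Bp).2.1⟩
        have h6 := (key Bp).2.2.2
        omega
      refine ⟨fun Bp =>
        ⟨insF (f ⟨(BinTree.del Bp.val).1, (key Bp).1, (key Bp).2.1⟩).val (BinTree.del Bp.val).2,
          below_insF (f ⟨(BinTree.del Bp.val).1, (key Bp).1, (key Bp).2.1⟩).2
            (insF_spec _ _ (hle Bp))⟩,
        ⟨?_, ?_⟩, ?_⟩
      · intro B₁ B₂ hEq
        have hv := congrArg Subtype.val hEq
        simp only at hv
        have hi : (BinTree.del B₁.val).2 = (BinTree.del B₂.val).2 := by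
          have t1 := insF_tn _ _ (hle B₁)
          have t2 := insF_tn _ _ (hle B₂)
          rw [← t1, ← t2, hv]
        have hη : (f ⟨(BinTree.del B₁.val).1, (key B₁).1, (key B₁).2.1⟩).val =
            (f ⟨(BinTree.del B₂.val).1, (key B₂).1, (key B₂).2.1⟩).val := by
          apply InsF_left_inj (insF_spec _ _ (hle B₁))
          rw [hv, hi]
          exact insF_spec _ _ (hle B₂)
        have harg := finj (Subtype.ext hη)
        have hd1 : (BinTree.del B₁.val).1 = (BinTree.del B₂.val).1 :=
          congrArg Subtype.val harg
        apply Subtype.ext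
        rw [(key B₁).2.2.1, (key B₂).2.2.1, hd1, hi]
      · intro ηp
        obtain ⟨η', s, hs, hIns, hb'⟩ := below_of_append_false ηp.2
        obtain ⟨B'p, hB'⟩ := fsurj ⟨η', hb'⟩
        have hne : B'p.val ≠ BinTree.nil := by
          rw [← BinTree.size_pos_iff, B'p.2.1]; omega
        have h5 : B'p.val.rightBranchLen = trailingNorth (f B'p).val + 1 := fstat B'p
        have h5' : B'p.val.rightBranchLen = trailingNorth η' + 1 := by
          rw [hB'] at h5; exact h5
        have hslt : s < B'p.val.rightBranchLen := by omega
        have hdel := BinTree.del_ins B'p.val s (le_of_lt hslt)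
        have hval : (BinTree.del (BinTree.ins B'p.val s)).1 = B'p.val := by rw [hdel]
        have hval2 : (BinTree.del (BinTree.ins B'p.val s)).2 = s := by rw [hdel]
        refine ⟨⟨BinTree.ins B'p.val s, ?_, ?_⟩, ?_⟩
        · rw [BinTree.size_ins _ _ (le_of_lt hslt), B'p.2.1]; simp
        · rw [BinTree.canopy_ins_lt _ hne _ hslt, B'p.2.2]
        · apply Subtype.ext
          simp only
          rw [fcongr _ B'p hval, hB', hval2]
          exact InsF_unique (insF_spec η' s hs) hIns
      · intro Bp
        simp only
        rw [insF_tn _ _ (hle Bp)]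
        conv_lhs => rw [(key Bp).2.2.1]
        rw [BinTree.rbl_ins _ _ (le_of_lt (key Bp).2.2.2)]

/-- For every integer `n ≥ 1` and every word `u` of length `n` over
`{a, b}`, the number of binary trees with `n + 1` vertices whose canopy is `u`
equals the number of lattice paths `η` (with unit north and east steps) that are
weakly below the path `ω_u`. -/
theorem card_binTree_canopy_eq_card_paths_below
    (n : ℕ) (hn : 1 ≤ n) (u : List Bool) (hu : u.length = n) :
    Nat.card {B : BinTree // B.size = n + 1 ∧ B.canopy = u} =
      Nat.card {η : List Bool // weaklyBelow u η} := by
  subst hu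
  obtain ⟨f, hbij, -⟩ := main_bij u
  exact Nat.card_eq_of_bijective f hbij
end

section
/- For every integer n ≥ 1, every word u of length n over {a,b}, and all integers f ≥ 0 and g ≥ 0, the number of Catalan tableaux of index n+1 with profile u, exactly f ones in the first row, and exactly g+1 unrestricted rows equals the number of lattice paths η weakly below ω_u that have exactly f horizontal contacts with ω_u and exactly g trailing north steps. -/
/-! ## Auxiliary development for the main theorem -/

namespace CTP
open List Finset

/-! ### Part C: the pick function and the r/e bijection -/

noncomputable def pick (S : Finset ℕ) (c e : ℕ) : ℕ :=
  sInf {i | (S ∪ Finset.Ioo i c).card ≤ e}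

lemma F_antitone (S : Finset ℕ) (c : ℕ) {i i' : ℕ} (h : i ≤ i') :
    (S ∪ Finset.Ioo i' c).card ≤ (S ∪ Finset.Ioo i c).card :=
  Finset.card_le_card (Finset.union_subset_union_right (Finset.Ioo_subset_Ioo_left h))

lemma F_step (S : Finset ℕ) (c i : ℕ) :
    (S ∪ Finset.Ioo i c).card ≤ (S ∪ Finset.Ioo (i + 1) c).card + 1 := by
  have hsub : S ∪ Finset.Ioo i c ⊆ insert (i + 1) (S ∪ Finset.Ioo (i + 1) c) := by
    intro x hx
    simp only [Finset.mem_union, Finset.mem_Ioo, Finset.mem_insert] at hx ⊢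
    rcases hx with h | h
    · exact Or.inr (Or.inl h)
    · rcases Nat.lt_or_ge (i + 1) x with h2 | h2
      · exact Or.inr (Or.inr ⟨h2, h.2⟩)
      · exact Or.inl (by omega)
  calc (S ∪ Finset.Ioo i c).card ≤ (insert (i + 1) (S ∪ Finset.Ioo (i + 1) c)).card :=
        Finset.card_le_card hsub
    _ ≤ _ := Finset.card_insert_le _ _

lemma F_mem_step (S : Finset ℕ) (c i : ℕ) (h : i + 1 ∈ S) :
    (S ∪ Finset.Ioo i c) = (S ∪ Finset.Ioo (i + 1) c) := by
  ext x
  simp only [Finset.mem_union, Finset.mem_Ioo]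
  constructor
  · rintro (h1 | h2)
    · exact Or.inl h1
    · rcases eq_or_lt_of_le (Nat.succ_le_of_lt h2.1) with h3 | h3
      · exact Or.inl (h3 ▸ h)
      · exact Or.inr ⟨h3, h2.2⟩
  · rintro (h1 | h2)
    · exact Or.inl h1
    · exact Or.inr ⟨by omega, h2.2⟩

lemma F_subset_Ioo {S : Finset ℕ} {c : ℕ} (hS : ∀ x ∈ S, 0 < x ∧ x < c) (r : ℕ) :
    S ∪ Finset.Ioo r c ⊆ Finset.Ioo 0 c := by
  intro x hx
  simp only [Finset.mem_union, Finset.mem_Ioo] at hx ⊢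
  rcases hx with h | h
  · exact (hS x h)
  · omega

lemma F_le {S : Finset ℕ} {c : ℕ} (hS : ∀ x ∈ S, 0 < x ∧ x < c) (r : ℕ) :
    (S ∪ Finset.Ioo r c).card ≤ c - 1 := by
  have := Finset.card_le_card (F_subset_Ioo hS r)
  simpa using this

lemma F_zero {S : Finset ℕ} {c : ℕ} (hS : ∀ x ∈ S, 0 < x ∧ x < c) :
    (S ∪ Finset.Ioo 0 c).card = c - 1 := by
  have h1 : S ∪ Finset.Ioo 0 c = Finset.Ioo 0 c := by
    apply Finset.union_eq_right.mpr
    intro x hx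
    simp only [Finset.mem_Ioo]
    exact hS x hx
  rw [h1]; simp

lemma F_ge (S : Finset ℕ) (c r : ℕ) : S.card ≤ (S ∪ Finset.Ioo r c).card :=
  Finset.card_le_card Finset.subset_union_left

lemma F_eq_cm1_iff {S : Finset ℕ} {c r : ℕ} (hS : ∀ x ∈ S, 0 < x ∧ x < c)
    (hr : r < c) (hrS : r ∉ S) :
    (S ∪ Finset.Ioo r c).card = c - 1 ↔ r = 0 := by
  constructor
  · intro h
    by_contra h0
    have hr0 : 0 < r := Nat.pos_of_ne_zero h0
    have hss : S ∪ Finset.Ioo r c ⊂ Finset.Ioo 0 c := by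
      refine Finset.ssubset_iff_of_subset (F_subset_Ioo hS r) |>.mpr ?_
      refine ⟨r, by simp [Finset.mem_Ioo, hr0, hr], ?_⟩
      simp only [Finset.mem_union, Finset.mem_Ioo]
      push_neg
      exact ⟨hrS, fun h => absurd h (lt_irrefl r)⟩
    have := Finset.card_lt_card hss
    simp only [Nat.card_Ioo] at this
    omega
  · rintro rfl
    exact F_zero hS

lemma pick_spec {S : Finset ℕ} {c e : ℕ} (hS : ∀ x ∈ S, 0 < x ∧ x < c)
    (hSe : S.card ≤ e) (hec : e < c) :
    pick S c e < c ∧ pick S c e ∉ S ∧ (S ∪ Finset.Ioo (pick S c e) c).card = e := by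
  have hcmem : c ∈ {i | (S ∪ Finset.Ioo i c).card ≤ e} := by
    simp only [Set.mem_setOf_eq, Finset.Ioo_self, Finset.union_empty]
    exact hSe
  have hne : {i | (S ∪ Finset.Ioo i c).card ≤ e}.Nonempty := ⟨c, hcmem⟩
  have hmem : (S ∪ Finset.Ioo (pick S c e) c).card ≤ e := Nat.sInf_mem hne
  have hmin : ∀ i, i < pick S c e → ¬((S ∪ Finset.Ioo i c).card ≤ e) := by
    intro i hi
    have h2 : i ∉ {i | (S ∪ Finset.Ioo i c).card ≤ e} :=
      Nat.notMem_of_lt_sInf (show i < sInf {i | (S ∪ Finset.Ioo i c).card ≤ e} from hi)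
    exact h2
  have hplec : pick S c e ≤ c := Nat.sInf_le hcmem
  have hpnotS : pick S c e ∉ S := by
    intro hmemS
    have hp1 : 0 < pick S c e := (hS _ hmemS).1
    obtain ⟨q, hq⟩ : ∃ q, pick S c e = q + 1 := ⟨pick S c e - 1, by omega⟩
    rw [hq] at hmemS hmem
    have h2 := F_mem_step S c q hmemS
    exact hmin q (by omega) (h2 ▸ hmem)
  have hplt : pick S c e < c := by
    rcases eq_or_lt_of_le hplec with h | h
    · exfalso
      have hc1 : 0 < c := by omega
      have h3 : (S ∪ Finset.Ioo (c - 1) c).card ≤ e := by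
        have he : Finset.Ioo (c - 1) c = ∅ := by
          ext x
          simp only [Finset.mem_Ioo, Finset.notMem_empty, iff_false]
          omega
        rw [he, Finset.union_empty]
        exact hSe
      exact hmin (c - 1) (by omega) h3
    · exact h
  have hcard : (S ∪ Finset.Ioo (pick S c e) c).card = e := by
    rcases Nat.eq_zero_or_pos (pick S c e) with h0 | h0
    · have h1 := F_zero hS
      rw [h0] at hmem
      rw [h0]
      omega
    · obtain ⟨q, hq⟩ : ∃ q, pick S c e = q + 1 := ⟨pick S c e - 1, by omega⟩
      have h1 : ¬((S ∪ Finset.Ioo q c).card ≤ e) := hmin q (by omega)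
      have h2 := F_step S c q
      rw [hq] at hmem ⊢
      omega
  exact ⟨hplt, hpnotS, hcard⟩

lemma pick_eq {S : Finset ℕ} {c r : ℕ} (hr : r < c) (hrS : r ∉ S) :
    pick S c ((S ∪ Finset.Ioo r c).card) = r := by
  set e := (S ∪ Finset.Ioo r c).card with he
  have hrmem : r ∈ {i | (S ∪ Finset.Ioo i c).card ≤ e} := Set.mem_setOf_eq ▸ le_refl _
  have hlt : ∀ i, i < r → ¬((S ∪ Finset.Ioo i c).card ≤ e) := by
    intro i hi
    have hsub : insert r (S ∪ Finset.Ioo r c) ⊆ S ∪ Finset.Ioo i c := by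
      intro x hx
      simp only [Finset.mem_insert, Finset.mem_union, Finset.mem_Ioo] at hx ⊢
      rcases hx with h | h | h
      · exact Or.inr ⟨by omega, by omega⟩
      · exact Or.inl h
      · exact Or.inr ⟨by omega, h.2⟩
    have hnotmem : r ∉ S ∪ Finset.Ioo r c := by
      simp only [Finset.mem_union, Finset.mem_Ioo]
      push_neg
      exact ⟨hrS, fun h => absurd h (lt_irrefl r)⟩
    have := Finset.card_le_card hsub
    rw [Finset.card_insert_of_notMem hnotmem] at this
    omega
  have h1 : pick S c e ≤ r := Nat.sInf_le hrmem
  rcases eq_or_lt_of_le h1 with h | h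
  · exact h
  · exact absurd (Nat.sInf_mem ⟨r, hrmem⟩) (hlt _ h)

/-! ### list models -/

def RValid : Finset ℕ → List ℕ → List ℕ → Prop
  | _, [], [] => True
  | S, c :: cs, r :: rs => r < c ∧ r ∉ S ∧ RValid (S ∪ Finset.Ioo r c) cs rs
  | _, _, _ => False

def EValid : ℕ → List ℕ → List ℕ → Prop
  | _, [], [] => True
  | h, c :: cs, e :: es => h ≤ e ∧ e < c ∧ EValid e cs es
  | _, _, _ => False

def toE : Finset ℕ → List ℕ → List ℕ → List ℕ
  | S, c :: cs, r :: rs => (S ∪ Finset.Ioo r c).card :: toE (S ∪ Finset.Ioo r c) cs rs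
  | _, _, _ => []

noncomputable def toR : Finset ℕ → List ℕ → List ℕ → List ℕ
  | S, c :: cs, e :: es => pick S c e :: toR (S ∪ Finset.Ioo (pick S c e) c) cs es
  | _, _, _ => []

def FS : Finset ℕ → List ℕ → List ℕ → Finset ℕ
  | S, c :: cs, r :: rs => FS (S ∪ Finset.Ioo r c) cs rs
  | S, _, _ => S

def Good (S : Finset ℕ) (cs : List ℕ) : Prop :=
  cs.Pairwise (· ≤ ·) ∧ ∀ x ∈ S, 0 < x ∧ ∀ c ∈ cs, x < c

lemma Good.step {S : Finset ℕ} {c : ℕ} {cs : List ℕ} (h : Good S (c :: cs)) {r : ℕ}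
    (hr : r < c) : Good (S ∪ Finset.Ioo r c) cs := by
  obtain ⟨hp, hm⟩ := h
  refine ⟨hp.of_cons, ?_⟩
  intro x hx
  rcases Finset.mem_union.mp hx with h1 | h1
  · exact ⟨(hm x h1).1, fun c' hc' => (hm x h1).2 c' (List.mem_cons_of_mem _ hc')⟩
  · simp only [Finset.mem_Ioo] at h1
    refine ⟨by omega, fun c' hc' => ?_⟩
    have : c ≤ c' := (List.pairwise_cons.mp hp).1 c' hc'
    omega

lemma Good.head {S : Finset ℕ} {c : ℕ} {cs : List ℕ} (h : Good S (c :: cs)) :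
    ∀ x ∈ S, 0 < x ∧ x < c :=
  fun x hx => ⟨(h.2 x hx).1, (h.2 x hx).2 c (List.mem_cons_self)⟩

lemma toE_spec : ∀ (cs : List ℕ) (S : Finset ℕ) (rs : List ℕ), Good S cs → RValid S cs rs →
    EValid S.card cs (toE S cs rs) ∧ toR S cs (toE S cs rs) = rs := by
  intro cs
  induction cs with
  | nil =>
    intro S rs _ hv
    cases rs with
    | nil => exact ⟨trivial, rfl⟩
    | cons r rs => exact absurd hv (by simp [RValid])
  | cons c cs ih =>
    intro S rs hg hv
    cases rs with
    | nil => exact absurd hv (by simp [RValid])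
    | cons r rs =>
      obtain ⟨hrc, hrS, hv'⟩ := hv
      have hg' := hg.step hrc
      obtain ⟨ih1, ih2⟩ := ih _ rs hg' hv'
      have hle := F_ge S c r
      have hub := F_le hg.head r
      have hcpos : 0 < c := by omega
      refine ⟨⟨hle, by omega, ih1⟩, ?_⟩
      simp only [toR, toE]
      rw [pick_eq hrc hrS]
      simp [ih2]

lemma toR_spec : ∀ (cs : List ℕ) (S : Finset ℕ) (es : List ℕ), Good S cs →
    EValid S.card cs es →
    RValid S cs (toR S cs es) ∧ toE S cs (toR S cs es) = es := by
  intro cs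
  induction cs with
  | nil =>
    intro S es _ hv
    cases es with
    | nil => exact ⟨trivial, rfl⟩
    | cons e es => exact absurd hv (by simp [EValid])
  | cons c cs ih =>
    intro S es hg hv
    cases es with
    | nil => exact absurd hv (by simp [EValid])
    | cons e es =>
      obtain ⟨hSe, hec, hv'⟩ := hv
      obtain ⟨hlt, hnm, hcard⟩ := pick_spec hg.head hSe hec
      have hg' := hg.step hlt
      rw [← hcard] at hv'
      obtain ⟨ih1, ih2⟩ := ih _ es hg' hv'
      exact ⟨⟨hlt, hnm, ih1⟩, by simp [toE, toR, hcard, ih2]⟩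

lemma count_zero_toE : ∀ (cs : List ℕ) (S : Finset ℕ) (rs : List ℕ), Good S cs →
    RValid S cs rs →
    rs.count 0 = ((cs.zip (toE S cs rs)).countP fun p => p.2 + 1 == p.1) := by
  intro cs
  induction cs with
  | nil =>
    intro S rs _ hv
    cases rs with
    | nil => simp
    | cons r rs => exact absurd hv (by simp [RValid])
  | cons c cs ih =>
    intro S rs hg hv
    cases rs with
    | nil => exact absurd hv (by simp [RValid])
    | cons r rs =>
      obtain ⟨hrc, hrS, hv'⟩ := hv
      have hzero : ((S ∪ Finset.Ioo r c).card = c - 1) ↔ r = 0 :=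
        F_eq_cm1_iff hg.head hrc hrS
      have hrec := ih _ rs (hg.step hrc) hv'
      simp only [toE, List.zip_cons_cons, List.countP_cons, List.count_cons]
      rw [← hrec]
      congr 1
      by_cases h0 : r = 0
      · subst h0
        have hcc : (S ∪ Finset.Ioo 0 c).card + 1 = c := by
          have := hzero.mpr rfl
          omega
        simp [hcc]
      · have hcc : ¬((S ∪ Finset.Ioo r c).card + 1 = c) := by
          intro h
          exact h0 (hzero.mp (by omega))
        simp [h0, hcc]

lemma getLastD_toE : ∀ (cs : List ℕ) (S : Finset ℕ) (rs : List ℕ), rs.length = cs.length →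
    (toE S cs rs).getLastD S.card = (FS S cs rs).card := by
  intro cs
  induction cs with
  | nil =>
    intro S rs h
    cases rs with
    | nil => simp [toE, FS]
    | cons r rs => simp at h
  | cons c cs ih =>
    intro S rs h
    cases rs with
    | nil => simp at h
    | cons r rs =>
      simp only [toE, FS, List.getLastD_cons]
      exact ih _ rs (by simpa using h)

lemma mem_FS : ∀ (cs : List ℕ) (S : Finset ℕ) (rs : List ℕ), rs.length = cs.length →
    ∀ x, (x ∈ FS S cs rs ↔ x ∈ S ∨ ∃ j, ∃ (h1 : j < cs.length) (h2 : j < rs.length),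
      rs[j] < x ∧ x < cs[j]) := by
  intro cs
  induction cs with
  | nil =>
    intro S rs h x
    cases rs with
    | nil => simp [FS]
    | cons r rs => simp at h
  | cons c cs ih =>
    intro S rs h x
    cases rs with
    | nil => simp at h
    | cons r rs =>
      simp only [FS]
      rw [ih _ rs (by simpa using h) x]
      simp only [Finset.mem_union, Finset.mem_Ioo]
      constructor
      · rintro ((h1 | h1) | ⟨j, hj1, hj2, hj3⟩)
        · exact Or.inl h1
        · exact Or.inr ⟨0, by simp, by simp, by simpa using h1⟩
        · exact Or.inr ⟨j + 1, by simpa using hj1, by simpa using hj2, by simpa using hj3⟩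
      · rintro (h1 | ⟨j, hj1, hj2, hj3⟩)
        · exact Or.inl (Or.inl h1)
        · cases j with
          | zero => exact Or.inl (Or.inr (by simpa using hj3))
          | succ j =>
            exact Or.inr ⟨j, by simpa using hj1, by simpa using hj2, by simpa using hj3⟩

lemma rvalid_iff : ∀ (cs : List ℕ) (S : Finset ℕ) (rs : List ℕ),
    RValid S cs rs ↔ (rs.length = cs.length ∧
      ∀ j (h1 : j < cs.length) (h2 : j < rs.length),
        rs[j] < cs[j] ∧ rs[j] ∉ S ∧
        ∀ j' (h1' : j' < cs.length) (h2' : j' < rs.length), j' < j →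
          ¬(rs[j'] < rs[j] ∧ rs[j] < cs[j'])) := by
  intro cs
  induction cs with
  | nil =>
    intro S rs
    cases rs with
    | nil => simp [RValid]
    | cons r rs => simp [RValid]
  | cons c cs ih =>
    intro S rs
    cases rs with
    | nil => simp [RValid]
    | cons r rs =>
      simp only [RValid, ih]
      constructor
      · rintro ⟨hrc, hrS, hlen, hrest⟩
        refine ⟨by simpa using hlen, ?_⟩
        intro j h1 h2
        cases j with
        | zero =>
          refine ⟨by simpa using hrc, by simpa using hrS, ?_⟩
          intro j' _ _ hj'
          omega
        | succ j =>
          have h1' : j < cs.length := by simpa using h1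
          have h2' : j < rs.length := by simpa using h2
          obtain ⟨ha, hb, hc⟩ := hrest j h1' h2'
          refine ⟨by simpa using ha, ?_, ?_⟩
          · simp only [Finset.mem_union, Finset.mem_Ioo] at hb
            push_neg at hb
            simpa using hb.1
          · intro j' hj1' hj2' hlt
            cases j' with
            | zero =>
              simp only [List.getElem_cons_zero, List.getElem_cons_succ]
              simp only [Finset.mem_union, Finset.mem_Ioo] at hb
              push_neg at hb
              rintro ⟨hx, hy⟩
              have := hb.2 hx
              omega
            | succ j' =>
              simp only [List.getElem_cons_succ]
              exact hc j' (by simpa using hj1') (by simpa using hj2') (by omega)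
      · rintro ⟨hlen, hall⟩
        have h0 := hall 0 (by simp) (by simp)
        refine ⟨by simpa using h0.1, by simpa using h0.2.1, by simpa using hlen, ?_⟩
        intro j h1 h2
        have hj := hall (j + 1) (by simpa using h1) (by simpa using h2)
        refine ⟨by simpa using hj.1, ?_, ?_⟩
        · simp only [Finset.mem_union, Finset.mem_Ioo]
          push_neg
          constructor
          · simpa using hj.2.1
          · intro hx
            have h5 := hj.2.2 0 (by simp) (by simp) (by omega)
            simp only [List.getElem_cons_zero, List.getElem_cons_succ] at h5
            omega
        · intro j' hj1' hj2' hlt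
          have := hj.2.2 (j' + 1) (by simpa using hj1') (by simpa using hj2') (by omega)
          simpa using this

lemma rvalid_length : ∀ (cs : List ℕ) (S : Finset ℕ) (rs : List ℕ),
    RValid S cs rs → rs.length = cs.length := by
  intro cs S rs h
  exact ((rvalid_iff cs S rs).mp h).1

lemma evalid_length : ∀ (cs : List ℕ) (h : ℕ) (es : List ℕ),
    EValid h cs es → es.length = cs.length := by
  intro cs
  induction cs with
  | nil => intro h es hv; cases es with
    | nil => rfl
    | cons e es => exact absurd hv (by simp [EValid])
  | cons c cs ih =>
    intro h es hv
    cases es with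
    | nil => exact absurd hv (by simp [EValid])
    | cons e es => simpa using ih e es hv.2.2

end CTP

namespace CTP
open List

lemma count_add_count (l : List Bool) : l.count true + l.count false = l.length := by
  induction l with
  | nil => simp
  | cons b l ih =>
    cases b <;> simp [List.count_cons] <;> omega

lemma ehAux_add : ∀ (w : List Bool) (a b : ℕ),
    eastHeightsAux (a + b) w = (eastHeightsAux a w).map (· + b) := by
  intro w
  induction w with
  | nil => intro a b; rfl
  | cons x w ih =>
    intro a b
    cases x with
    | true =>
      show eastHeightsAux (a + b + 1) w = (eastHeightsAux (a + 1) w).map (· + b)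
      rw [show a + b + 1 = (a + 1) + b by omega]
      exact ih (a + 1) b
    | false =>
      show (a + b) :: eastHeightsAux (a + b) w = ((a :: eastHeightsAux a w).map (· + b))
      simp [ih a b]

lemma ehAux_nil_of_count_false {w : List Bool} (h : w.count false = 0) :
    ∀ a, eastHeightsAux a w = [] := by
  induction w with
  | nil => intro a; rfl
  | cons x w ih =>
    intro a
    cases x with
    | true =>
      show eastHeightsAux (a + 1) w = []
      exact ih (by simpa using h) (a + 1)
    | false => simp [List.count_cons] at h

lemma length_ehAux : ∀ (w : List Bool) (a : ℕ), (eastHeightsAux a w).length = w.count false := by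
  intro w
  induction w with
  | nil => intro a; rfl
  | cons x w ih =>
    intro a
    cases x with
    | true => show (eastHeightsAux (a+1) w).length = _; simp [ih, List.count_cons]
    | false => show (a :: eastHeightsAux a w).length = _; simp [ih, List.count_cons]

lemma ehAux_lb : ∀ (w : List Bool) (a : ℕ), ∀ x ∈ eastHeightsAux a w, a ≤ x := by
  intro w
  induction w with
  | nil => intro a x hx; simp [eastHeightsAux] at hx
  | cons b w ih =>
    intro a x hx
    cases b with
    | true =>
      have := ih (a + 1) x hx
      omega
    | false =>
      rcases List.mem_cons.mp hx with h | h
      · omega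
      · exact ih a x h

lemma ehAux_ub : ∀ (w : List Bool) (a : ℕ), ∀ x ∈ eastHeightsAux a w, x ≤ a + w.count true := by
  intro w
  induction w with
  | nil => intro a x hx; simp [eastHeightsAux] at hx
  | cons b w ih =>
    intro a x hx
    cases b with
    | true =>
      have := ih (a + 1) x hx
      simp [List.count_cons]
      omega
    | false =>
      simp only [List.count_cons]
      rcases List.mem_cons.mp hx with h | h
      · omega
      · have := ih a x h
        omega

lemma ehAux_pairwise : ∀ (w : List Bool) (a : ℕ), (eastHeightsAux a w).Pairwise (· ≤ ·) := by
  intro w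
  induction w with
  | nil => intro a; simp [eastHeightsAux]
  | cons b w ih =>
    intro a
    cases b with
    | true => exact ih (a + 1)
    | false =>
      refine List.pairwise_cons.mpr ⟨fun x hx => ehAux_lb w a x hx, ih a⟩

/-- Main forward lemma: weakly-below prefix condition implies pointwise
comparison of east heights (generalized bases). -/
lemma below_forall₂ : ∀ (N : ℕ) (u η : List Bool) (a d : ℕ),
    u.length + η.length ≤ N →
    η.count false = u.count false →
    (∀ t, a + ((η.take (t + d)).count true) ≤ a + d + ((u.take t).count true)) →
    List.Forall₂ (· ≤ ·) (eastHeightsAux a η) (eastHeightsAux (a + d) u) := by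
  intro N
  induction N with
  | zero =>
    intro u η a d hN hcf _
    have hu : u = [] := List.eq_nil_of_length_eq_zero (by omega)
    have hη : η = [] := List.eq_nil_of_length_eq_zero (by omega)
    subst hu; subst hη
    exact List.Forall₂.nil
  | succ N ih =>
    intro u η a d hN hcf H
    cases u with
    | nil =>
      rw [ehAux_nil_of_count_false (by simpa using hcf) a]
      exact List.Forall₂.nil
    | cons x u' =>
      cases x with
      | true =>
        show List.Forall₂ _ (eastHeightsAux a η) (eastHeightsAux (a + d + 1) u')
        rw [show a + d + 1 = a + (d + 1) by omega]
        apply ih u' η a (d + 1) (by simp at hN ⊢; omega) (by simpa using hcf)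
        intro t
        have h := H (t + 1)
        rw [show t + 1 + d = t + (d + 1) by omega] at h
        simp [List.take_succ_cons, List.count_cons] at h ⊢
        omega
      | false =>
        cases η with
        | nil => simp [List.count_cons] at hcf
        | cons y η' =>
          cases y with
          | false =>
            show List.Forall₂ _ (a :: eastHeightsAux a η') ((a + d) :: eastHeightsAux (a + d) u')
            refine List.Forall₂.cons (by omega) ?_
            apply ih u' η' a d (by simp at hN ⊢; omega) (by simpa using hcf)
            intro t
            have h := H (t + 1)
            rw [show t + 1 + d = (t + d) + 1 by omega] at h
            simpa [List.count_cons] using h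
          | true =>
            show List.Forall₂ _ (eastHeightsAux (a + 1) η') (eastHeightsAux (a + d) (false :: u'))
            cases d with
            | zero =>
              exfalso
              have h := H 1
              simp [List.count_cons] at h
            | succ d' =>
              rw [show a + (d' + 1) = (a + 1) + d' by omega]
              apply ih (false :: u') η' (a + 1) d' (by simp at hN ⊢; omega)
                (by simpa using hcf)
              intro t
              have h := H t
              rw [show t + (d' + 1) = (t + d') + 1 by omega] at h
              simp [List.take_succ_cons, List.count_cons] at h ⊢
              omega

/-- Main backward lemma. -/
lemma forall₂_below : ∀ (N : ℕ) (u η : List Bool) (a d : ℕ),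
    u.length + η.length ≤ N →
    η.length = u.length + d →
    η.count false = u.count false →
    List.Forall₂ (· ≤ ·) (eastHeightsAux a η) (eastHeightsAux (a + d) u) →
    ∀ t, a + ((η.take (t + d)).count true) ≤ a + d + ((u.take t).count true) := by
  intro N
  induction N with
  | zero =>
    intro u η a d hN hlen hcf _ t
    have hη : η = [] := List.eq_nil_of_length_eq_zero (by omega)
    subst hη
    simp
    omega
  | succ N ih =>
    intro u η a d hN hlen hcf hF t
    have hct : (η.take (t + d)).count true ≤ t + d := by
      calc (η.take (t + d)).count true ≤ (η.take (t + d)).length := List.count_le_length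
        _ ≤ t + d := by simp [List.length_take]
    cases u with
    | nil =>
      have hctfull : (η.take (t + d)).count true ≤ η.count true :=
        List.Sublist.count_le _ (List.take_sublist _ _)
      have h1 := count_add_count η
      simp only [List.length_nil] at hlen
      simp only [List.count_nil] at hcf
      simp only [List.take_nil, List.count_nil]
      omega
    | cons x u' =>
      cases x with
      | true =>
        cases t with
        | zero => simpa using hct
        | succ t' =>
          have h := ih u' η a (d + 1) (by simp at hN ⊢; omega)
            (by simp at hlen ⊢; omega) (by simpa using hcf)
            (by rw [show a + (d+1) = a + d + 1 by omega]; exact hF) t'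
          rw [show t' + (d + 1) = t' + 1 + d by omega] at h
          simp [List.take_succ_cons, List.count_cons] at h ⊢
          omega
      | false =>
        cases η with
        | nil => simp [List.count_cons] at hcf
        | cons y η' =>
          cases y with
          | false =>
            have hF' : List.Forall₂ (· ≤ ·) (eastHeightsAux a η') (eastHeightsAux (a+d) u') :=
              (List.forall₂_cons.mp hF).2
            cases t with
            | zero => simpa using hct
            | succ t' =>
              have h := ih u' η' a d (by simp at hN ⊢; omega)
                (by simp at hlen ⊢; omega) (by simpa using hcf) hF' t'
              rw [show t' + 1 + d = (t' + d) + 1 by omega]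
              simpa [List.count_cons] using h
          | true =>
            cases d with
            | zero =>
              exfalso
              have hFL : eastHeightsAux a (true :: η') = eastHeightsAux (a + 1) η' := rfl
              rw [hFL] at hF
              cases hL : eastHeightsAux (a + 1) η' with
              | nil =>
                rw [hL, show eastHeightsAux (a + 0) (false :: u')
                  = (a + 0) :: eastHeightsAux (a + 0) u' from rfl] at hF
                cases hF
              | cons z l =>
                rw [hL] at hF
                show False
                have hz : a + 1 ≤ z := ehAux_lb η' (a+1) z (by rw [hL]; exact List.mem_cons_self)
                rcases List.forall₂_cons_left_iff.mp hF with ⟨b, lb, hzb, _, heq⟩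
                have : eastHeightsAux (a + 0) (false :: u') = (a+0) :: eastHeightsAux (a+0) u' := rfl
                rw [this] at heq
                cases heq
                omega
            | succ d' =>
              have h := ih (false :: u') η' (a + 1) d' (by simp at hN ⊢; omega)
                (by simp at hlen ⊢; omega) (by simpa using hcf)
                (by rw [show a + 1 + d' = a + (d' + 1) by omega]; exact hF) t
              rw [show t + (d' + 1) = (t + d') + 1 by omega]
              have goal2 : a + ((true :: η').take (t + d' + 1)).count true
                  = a + 1 + ((η'.take (t + d')).count true) := by
                simp [List.count_cons]
                omega
              rw [goal2]
              omega

end CTP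

namespace CTP
open List

def pathOf : ℕ → ℕ → List ℕ → List Bool
  | prev, top, [] => List.replicate (top - prev) true
  | prev, top, e :: es => List.replicate (e - prev) true ++ false :: pathOf e top es

lemma ehAux_replicate_true_append : ∀ (d h : ℕ) (w : List Bool),
    eastHeightsAux h (List.replicate d true ++ w) = eastHeightsAux (h + d) w := by
  intro d
  induction d with
  | zero => intro h w; simp
  | succ d ih =>
    intro h w
    show eastHeightsAux (h + 1) (List.replicate d true ++ w) = _
    rw [ih (h + 1) w]
    congr 1
    omega

lemma ehAux_replicate_true (d h : ℕ) :
    eastHeightsAux h (List.replicate d true) = [] := by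
  have := ehAux_replicate_true_append d h []
  simpa [eastHeightsAux] using this

lemma pathOf_eastHeights : ∀ (es : List ℕ) (prev top : ℕ),
    (∀ x ∈ es, prev ≤ x) → List.Pairwise (· ≤ ·) es →
    eastHeightsAux prev (pathOf prev top es) = es := by
  intro es
  induction es with
  | nil => intro prev top _ _; exact ehAux_replicate_true _ _
  | cons e es ih =>
    intro prev top hlb hpw
    show eastHeightsAux prev (List.replicate (e - prev) true ++ false :: pathOf e top es) = _
    rw [ehAux_replicate_true_append]
    have he : prev ≤ e := hlb e (List.mem_cons_self)
    rw [show prev + (e - prev) = e by omega]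
    show e :: eastHeightsAux e (pathOf e top es) = e :: es
    congr 1
    exact ih e top (fun x hx => (List.pairwise_cons.mp hpw).1 x hx) (List.pairwise_cons.mp hpw).2

lemma count_true_pathOf : ∀ (es : List ℕ) (prev top : ℕ),
    (∀ x ∈ es, prev ≤ x ∧ x ≤ top) → List.Pairwise (· ≤ ·) es → prev ≤ top →
    (pathOf prev top es).count true = top - prev := by
  intro es
  induction es with
  | nil => intro prev top _ _ _; simp [pathOf]
  | cons e es ih =>
    intro prev top hb hpw hpt
    have he := hb e (List.mem_cons_self)
    show (List.replicate (e - prev) true ++ false :: pathOf e top es).count true = _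
    rw [List.count_append, List.count_cons]
    rw [ih e top (fun x hx => ⟨(List.pairwise_cons.mp hpw).1 x hx, (hb x (List.mem_cons_of_mem _ hx)).2⟩)
      (List.pairwise_cons.mp hpw).2 he.2]
    simp [List.count_replicate]
    omega

lemma count_false_pathOf : ∀ (es : List ℕ) (prev top : ℕ),
    (pathOf prev top es).count false = es.length := by
  intro es
  induction es with
  | nil => intro prev top; simp [pathOf, List.count_replicate]
  | cons e es ih =>
    intro prev top
    show (List.replicate (e - prev) true ++ false :: pathOf e top es).count false = _
    rw [List.count_append, List.count_cons]
    simp [List.count_replicate, ih]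

lemma pathOf_cons_true : ∀ (es : List ℕ) (prev top : ℕ),
    (∀ x ∈ es, prev + 1 ≤ x) → prev + 1 ≤ top →
    pathOf prev top es = true :: pathOf (prev + 1) top es := by
  intro es prev top hlb htop
  cases es with
  | nil =>
    show List.replicate (top - prev) true = true :: List.replicate (top - (prev + 1)) true
    rw [show top - prev = (top - (prev + 1)) + 1 by omega]
    rfl
  | cons e es =>
    have he := hlb e (List.mem_cons_self)
    show List.replicate (e - prev) true ++ false :: pathOf e top es
      = true :: (List.replicate (e - (prev + 1)) true ++ false :: pathOf e top es)
    rw [show e - prev = (e - (prev + 1)) + 1 by omega]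
    rfl

lemma pathOf_recover : ∀ (η : List Bool) (prev : ℕ),
    pathOf prev (prev + η.count true) (eastHeightsAux prev η) = η := by
  intro η
  induction η with
  | nil => intro prev; simp [pathOf, eastHeightsAux]
  | cons b η ih =>
    intro prev
    cases b with
    | false =>
      show pathOf prev (prev + η.count true) (prev :: eastHeightsAux prev η) = _
      show List.replicate (prev - prev) true ++ false :: pathOf prev (prev + η.count true) (eastHeightsAux prev η) = _
      simp only [Nat.sub_self, List.replicate_zero, List.nil_append]
      rw [ih prev]
    | true =>
      show pathOf prev (prev + (true :: η).count true) (eastHeightsAux (prev + 1) η) = _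
      have hc : prev + (true :: η).count true = (prev + 1) + η.count true := by
        simp [List.count_cons]; omega
      rw [hc]
      rw [pathOf_cons_true _ _ _ (fun x hx => ehAux_lb η (prev + 1) x hx) (by omega)]
      rw [ih (prev + 1)]

lemma takeWhile_append_of_mem_false : ∀ (l w : List Bool), false ∈ l →
    (l ++ w).takeWhile (· == true) = l.takeWhile (· == true) := by
  intro l
  induction l with
  | nil => intro w h; simp at h
  | cons x xs ih =>
    intro w h
    cases x with
    | false => simp [List.takeWhile_cons]
    | true =>
      have hx : false ∈ xs := by simpa using h
      simpa [List.takeWhile_cons] using ih w hx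

lemma trailing_append_of_mem_false (w v : List Bool) (hv : false ∈ v) :
    trailingNorth (w ++ v) = trailingNorth v := by
  unfold trailingNorth
  rw [List.reverse_append, takeWhile_append_of_mem_false _ _ (by simpa using hv)]

lemma takeWhile_replicate_true_append (k : ℕ) (z : List Bool) :
    (List.replicate k true ++ false :: z).takeWhile (· == true) = List.replicate k true := by
  induction k with
  | zero => simp
  | succ k ih => simp [List.replicate_succ, List.takeWhile_cons, ih]

lemma trailing_replicate (k : ℕ) : trailingNorth (List.replicate k true) = k := by
  unfold trailingNorth
  rw [List.reverse_replicate]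
  induction k with
  | zero => simp
  | succ k ih => simpa [List.replicate_succ, List.takeWhile_cons] using ih

lemma trailing_false_replicate (w : List Bool) (k : ℕ) :
    trailingNorth (w ++ false :: List.replicate k true) = k := by
  unfold trailingNorth
  have h1 : (w ++ false :: List.replicate k true).reverse
      = List.replicate k true ++ false :: w.reverse := by
    simp [List.reverse_append, List.reverse_cons, List.reverse_replicate]
  rw [h1, takeWhile_replicate_true_append, List.length_replicate]

lemma trailing_pathOf : ∀ (es : List ℕ) (prev top : ℕ),
    (∀ x ∈ es, prev ≤ x ∧ x ≤ top) → List.Pairwise (· ≤ ·) es →  prev ≤ top →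
    trailingNorth (pathOf prev top es) = top - es.getLastD prev := by
  intro es
  induction es with
  | nil => intro prev top _ _ _; simpa [pathOf] using trailing_replicate _
  | cons e es ih =>
    intro prev top hb hpw hpt
    have he := hb e (List.mem_cons_self)
    show trailingNorth (List.replicate (e - prev) true ++ false :: pathOf e top es) = _
    cases es with
    | nil =>
      show trailingNorth
        (List.replicate (e - prev) true ++ false :: List.replicate (top - e) true) = _
      rw [trailing_false_replicate]
      rfl
    | cons e' es' =>
      have hmem : false ∈ false :: pathOf e top (e' :: es') := List.mem_cons_self
      rw [trailing_append_of_mem_false _ _ hmem]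
      have hmem2 : false ∈ pathOf e top (e' :: es') := by
        show false ∈ List.replicate (e' - e) true ++ false :: pathOf e' top es'
        simp
      have : trailingNorth (false :: pathOf e top (e' :: es'))
          = trailingNorth ([false] ++ pathOf e top (e' :: es')) := rfl
      rw [this, trailing_append_of_mem_false _ _ hmem2]
      rw [ih e top (fun x hx => ⟨(List.pairwise_cons.mp hpw).1 x hx, (hb x (List.mem_cons_of_mem _ hx)).2⟩)
        (List.pairwise_cons.mp hpw).2 he.2]
      rfl

end CTP

namespace CTP
open List

lemma evalid_iff_aux : ∀ (hs es : List ℕ) (h : ℕ),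
    EValid h (hs.map (· + 1)) es ↔
      (List.Forall₂ (· ≤ ·) es hs ∧ List.Chain' (· ≤ ·) (h :: es)) := by
  intro hs
  induction hs with
  | nil =>
    intro es h
    cases es with
    | nil => simp [EValid]; exact List.isChain_singleton _
    | cons e es => simp [EValid]
  | cons c cs ih =>
    intro es h
    cases es with
    | nil => simp [EValid]
    | cons e es =>
      show (h ≤ e ∧ e < c + 1 ∧ EValid e (cs.map (· + 1)) es) ↔ _
      rw [ih es e]
      constructor
      · rintro ⟨h1, h2, h3, h4⟩
        exact ⟨List.Forall₂.cons (by omega) h3, List.isChain_cons_cons.mpr ⟨h1, h4⟩⟩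
      · rintro ⟨h1, h2⟩
        rcases List.forall₂_cons.mp h1 with ⟨h3, h4⟩
        rcases List.isChain_cons_cons.mp h2 with ⟨h5, h6⟩
        exact ⟨h5, by omega, h4, h6⟩

lemma weaklyBelow_iff_evalid (u η : List Bool) :
    weaklyBelow u η ↔ (η.count false = u.count false ∧ η.count true = u.count true ∧
      EValid 0 ((eastHeights u).map (· + 1)) (eastHeights η)) := by
  constructor
  · rintro ⟨hlen, hct, hpre⟩
    have hcf : η.count false = u.count false := by
      have h1 := count_add_count η
      have h2 := count_add_count u
      omega
    refine ⟨hcf, hct, ?_⟩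
    rw [evalid_iff_aux]
    constructor
    · have := below_forall₂ (u.length + η.length) u η 0 0 (le_refl _) hcf ?_
      · simpa [eastHeights] using this
      · intro t
        have := hpre t
        simpa using this
    · have hpw : (0 :: eastHeights η).Pairwise (· ≤ ·) := by
        refine List.pairwise_cons.mpr ⟨fun x _ => Nat.zero_le x, ehAux_pairwise η 0⟩
      exact List.isChain_iff_pairwise.mpr hpw
  · rintro ⟨hcf, hct, hE⟩
    rw [evalid_iff_aux] at hE
    have hlen : η.length = u.length := by
      have h1 := count_add_count η
      have h2 := count_add_count u
      omega
    refine ⟨hlen, hct, ?_⟩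
    intro t
    have := forall₂_below (u.length + η.length) u η 0 0 (le_refl _) (by omega) hcf
      (by simpa [eastHeights] using hE.1) t
    simpa using this

lemma mem_le_of_forall₂ {es hs : List ℕ} (h : List.Forall₂ (· ≤ ·) es hs) {K : ℕ}
    (hK : ∀ x ∈ hs, x ≤ K) : ∀ x ∈ es, x ≤ K := by
  induction h with
  | nil => simp
  | cons h1 h2 ih =>
    intro x hx
    rcases List.mem_cons.mp hx with h3 | h3
    · subst h3
      exact le_trans h1 (hK _ (List.mem_cons_self))
    · exact ih (fun y hy => hK y (List.mem_cons_of_mem _ hy)) x h3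

lemma evalid_props {u : List Bool} {es : List ℕ} (hE : EValid 0 ((eastHeights u).map (· + 1)) es) :
    (∀ x ∈ es, x ≤ u.count true) ∧ es.Pairwise (· ≤ ·) ∧ es.length = u.count false := by
  rw [evalid_iff_aux] at hE
  refine ⟨mem_le_of_forall₂ hE.1 (fun x hx => by simpa using ehAux_ub u 0 x hx), ?_, ?_⟩
  · exact (List.pairwise_cons.mp (List.isChain_iff_pairwise.mp hE.2)).2
  · rw [List.Forall₂.length_eq hE.1, eastHeights, length_ehAux]

/-- Backward map: from a valid `es` build the path; it is weakly below. -/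
lemma weaklyBelow_pathOf {u : List Bool} {es : List ℕ}
    (hE : EValid 0 ((eastHeights u).map (· + 1)) es) :
    weaklyBelow u (pathOf 0 (u.count true) es) := by
  obtain ⟨hub, hpw, hlen⟩ := evalid_props hE
  have hb : ∀ x ∈ es, 0 ≤ x ∧ x ≤ u.count true := fun x hx => ⟨Nat.zero_le _, hub x hx⟩
  have hct : (pathOf 0 (u.count true) es).count true = u.count true := by
    rw [count_true_pathOf es 0 (u.count true) hb hpw (Nat.zero_le _)]
    omega
  have hcf : (pathOf 0 (u.count true) es).count false = u.count false := by
    rw [count_false_pathOf, hlen]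
  have heh : eastHeights (pathOf 0 (u.count true) es) = es :=
    pathOf_eastHeights es 0 (u.count true) (fun x _ => Nat.zero_le x) hpw
  rw [weaklyBelow_iff_evalid]
  exact ⟨hcf, by omega, by rw [heh]; exact hE⟩

lemma eastHeights_pathOf {u : List Bool} {es : List ℕ}
    (hE : EValid 0 ((eastHeights u).map (· + 1)) es) :
    eastHeights (pathOf 0 (u.count true) es) = es := by
  obtain ⟨hub, hpw, hlen⟩ := evalid_props hE
  exact pathOf_eastHeights es 0 (u.count true) (fun x _ => Nat.zero_le x) hpw

lemma pathOf_eastHeights_self {u η : List Bool} (h : weaklyBelow u η) :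
    pathOf 0 (u.count true) (eastHeights η) = η := by
  have hct : η.count true = u.count true := h.2.1
  have := pathOf_recover η 0
  simpa [hct, eastHeights] using this

lemma contacts_eq_countP {u η : List Bool} :
    contacts u η
      = ((((eastHeights u).map (· + 1)).zip (eastHeights η)).countP fun p => p.2 + 1 == p.1) := by
  unfold contacts
  rw [List.zip_map_left, List.countP_map]
  apply List.countP_congr
  rintro ⟨x, y⟩ _
  show ((x == y) = true) ↔ ((y + 1 == x + 1) = true)
  simp only [beq_iff_eq]
  omega

lemma trailing_eq {u : List Bool} {es : List ℕ}
    (hE : EValid 0 ((eastHeights u).map (· + 1)) es) :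
    trailingNorth (pathOf 0 (u.count true) es) = u.count true - es.getLastD 0 := by
  obtain ⟨hub, hpw, hlen⟩ := evalid_props hE
  exact trailing_pathOf es 0 (u.count true) (fun x hx => ⟨Nat.zero_le _, hub x hx⟩) hpw
    (Nat.zero_le _)

end CTP

namespace CTP
open List

/-! ### Part B1: border words and delta lists -/

def borderAux : List ℕ → List Bool
  | [] => []
  | d :: ds => true :: (List.replicate d false ++ borderAux ds)

def deltaList : List Bool → List ℕ
  | [] => [0]
  | true :: w => 0 :: deltaList w
  | false :: w => ((deltaList w).headD 0 + 1) :: (deltaList w).tail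

lemma deltaList_ne_nil (w : List Bool) : deltaList w ≠ [] := by
  cases w with
  | nil => simp [deltaList]
  | cons b w => cases b <;> simp [deltaList]

lemma deltaList_cons_exists (w : List Bool) : ∃ h t, deltaList w = h :: t := by
  cases hd : deltaList w with
  | nil => exact absurd hd (deltaList_ne_nil w)
  | cons h t => exact ⟨h, t, rfl⟩

lemma borderAux_deltaList : ∀ (w : List Bool), borderAux (deltaList w) = true :: w := by
  intro w
  induction w with
  | nil => rfl
  | cons b w ih =>
    cases b with
    | true =>
      show true :: (List.replicate 0 false ++ borderAux (deltaList w)) = _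
      simp [ih]
    | false =>
      obtain ⟨h, t, hht⟩ := deltaList_cons_exists w
      show borderAux (((deltaList w).headD 0 + 1) :: (deltaList w).tail) = _
      rw [hht]
      show true :: (List.replicate (h + 1) false ++ borderAux t) = _
      rw [hht] at ih
      have ih' : List.replicate h false ++ borderAux t = w :=
        List.cons_injective.eq_iff.mp ih
      show true :: (false :: (List.replicate h false ++ borderAux t)) = _
      rw [ih']

lemma length_deltaList : ∀ (w : List Bool), (deltaList w).length = w.count true + 1 := by
  intro w
  induction w with
  | nil => rfl
  | cons b w ih =>
    cases b with
    | true => simp [deltaList, ih, List.count_cons]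
    | false =>
      obtain ⟨h, t, hht⟩ := deltaList_cons_exists w
      show (((deltaList w).headD 0 + 1) :: (deltaList w).tail).length = _
      rw [hht] at ih ⊢
      simp [List.count_cons] at ih ⊢
      omega

lemma sum_deltaList : ∀ (w : List Bool), (deltaList w).sum = w.count false := by
  intro w
  induction w with
  | nil => rfl
  | cons b w ih =>
    cases b with
    | true => simp [deltaList, ih, List.count_cons]
    | false =>
      obtain ⟨h, t, hht⟩ := deltaList_cons_exists w
      show (((deltaList w).headD 0 + 1) :: (deltaList w).tail).sum = _
      rw [hht] at ih ⊢
      simp [List.count_cons] at ih ⊢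
      omega

lemma borderAux_nil_or_head : ∀ (ds : List ℕ), borderAux ds = [] ∨ ∃ l, borderAux ds = true :: l := by
  intro ds
  cases ds with
  | nil => exact Or.inl rfl
  | cons d ds => exact Or.inr ⟨_, rfl⟩

lemma blockEq : ∀ (d d' : ℕ) (X Y : List Bool),
    (X = [] ∨ ∃ l, X = true :: l) → (Y = [] ∨ ∃ l, Y = true :: l) →
    List.replicate d false ++ X = List.replicate d' false ++ Y → d = d' ∧ X = Y := by
  intro d
  induction d with
  | zero =>
    intro d' X Y hX hY heq
    cases d' with
    | zero => exact ⟨rfl, by simpa using heq⟩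
    | succ d' =>
      exfalso
      simp only [List.replicate_zero, List.nil_append, List.replicate_succ,
        List.cons_append] at heq
      rcases hX with h | ⟨l, h⟩
      · rw [h] at heq; exact List.cons_ne_nil _ _ heq.symm
      · rw [h] at heq
        exact Bool.noConfusion (List.cons.injEq _ _ _ _ ▸ heq : _ ∧ _).1
  | succ d ih =>
    intro d' X Y hX hY heq
    cases d' with
    | zero =>
      exfalso
      simp only [List.replicate_zero, List.nil_append, List.replicate_succ,
        List.cons_append] at heq
      rcases hY with h | ⟨l, h⟩
      · rw [h] at heq; exact List.cons_ne_nil _ _ heq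
      · rw [h] at heq
        exact Bool.noConfusion (List.cons.injEq _ _ _ _ ▸ heq : _ ∧ _).1
    | succ d' =>
      simp only [List.replicate_succ, List.cons_append, List.cons.injEq] at heq
      obtain ⟨hd, hX'⟩ := ih d' X Y hX hY heq.2
      exact ⟨by omega, hX'⟩

lemma borderAux_inj : ∀ (ds ds' : List ℕ), borderAux ds = borderAux ds' → ds = ds' := by
  intro ds
  induction ds with
  | nil =>
    intro ds' heq
    cases ds' with
    | nil => rfl
    | cons d' ds' => exact absurd heq.symm (List.cons_ne_nil _ _)
  | cons d ds ih =>
    intro ds' heq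
    cases ds' with
    | nil => exact absurd heq (List.cons_ne_nil _ _)
    | cons d' ds' =>
      have heq' : List.replicate d false ++ borderAux ds
          = List.replicate d' false ++ borderAux ds' :=
        List.cons_injective.eq_iff.mp heq
      obtain ⟨h1, h2⟩ := blockEq d d' _ _ (borderAux_nil_or_head ds) (borderAux_nil_or_head ds') heq'
      rw [h1, ih ds' (h2)]

lemma borderAux_map {α : Type*} (g : α → ℕ) (L : List α) :
    borderAux (L.map g) = L.flatMap (fun i => true :: List.replicate (g i) false) := by
  induction L with
  | nil => rfl
  | cons a L ih =>
    show true :: (List.replicate (g a) false ++ borderAux (L.map g)) = _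
    simp [List.flatMap_cons, ih]

lemma ehAux_replicate_false_append : ∀ (d g : ℕ) (w : List Bool),
    eastHeightsAux g (List.replicate d false ++ w) = List.replicate d g ++ eastHeightsAux g w := by
  intro d
  induction d with
  | zero => intro g w; simp
  | succ d ih =>
    intro g w
    show g :: eastHeightsAux g (List.replicate d false ++ w) = _
    rw [ih]
    simp [List.replicate_succ]

lemma countP_replicate (p : ℕ → Bool) (d a : ℕ) :
    (List.replicate d a).countP p = if p a then d else 0 := by
  induction d with
  | zero => simp
  | succ d ih =>
    rw [List.replicate_succ, List.countP_cons]
    by_cases h : p a <;> simp [h, ih]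

lemma countP_ehAux_borderAux : ∀ (ds : List ℕ) (h i : ℕ),
    (eastHeightsAux h (borderAux ds)).countP (fun x => decide (x ≤ i)) = (ds.take (i - h)).sum := by
  intro ds
  induction ds with
  | nil => intro h i; simp [borderAux, eastHeightsAux]
  | cons d ds ih =>
    intro h i
    show (eastHeightsAux h (true :: (List.replicate d false ++ borderAux ds))).countP _ = _
    show (eastHeightsAux (h+1) (List.replicate d false ++ borderAux ds)).countP _ = _
    rw [ehAux_replicate_false_append, List.countP_append, countP_replicate, ih (h+1) i]
    by_cases hhi : h + 1 ≤ i
    · have h1 : i - h = (i - (h + 1)) + 1 := by omega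
      rw [h1]
      simp [hhi, List.take_succ_cons]
    · have h1 : i - h = 0 := by omega
      have h2 : i - (h + 1) = 0 := by omega
      rw [h1, h2]
      simp [hhi]

lemma sorted_getElem_le_iff : ∀ (L : List ℕ), L.Pairwise (· ≤ ·) →
    ∀ (j : ℕ) (hj : j < L.length) (x : ℕ),
      (L[j] ≤ x ↔ j < L.countP (fun y => decide (y ≤ x))) := by
  intro L
  induction L with
  | nil => intro _ j hj; simp at hj
  | cons y L ih =>
    intro hpw j hj x
    obtain ⟨hy, hL⟩ := List.pairwise_cons.mp hpw
    cases j with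
    | zero =>
      simp only [List.getElem_cons_zero, List.countP_cons]
      by_cases h : y ≤ x
      · simp [h]
        try omega
      · have hz : L.countP (fun y => decide (y ≤ x)) = 0 := by
          rw [List.countP_eq_zero]
          intro z hz
          simp only [decide_eq_true_eq]
          have := hy z hz
          omega
        simp [h, hz]
    | succ j =>
      simp only [List.getElem_cons_succ, List.countP_cons]
      rw [ih hL j (by simpa using hj) x]
      by_cases h : y ≤ x
      · simp [h]
        try omega
      · have hz : L.countP (fun y => decide (y ≤ x)) = 0 := by
          rw [List.countP_eq_zero]
          intro z hz
          simp only [decide_eq_true_eq]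
          have := hy z hz
          omega
        simp [h, hz]
        try omega

/-! ### facts about `csOf` -/

def csOf (u : List Bool) : List ℕ := (eastHeights u).map (· + 1)

lemma csOf_eq (u : List Bool) : csOf u = eastHeightsAux 1 u := by
  have := ehAux_add u 0 1
  simp only [Nat.zero_add] at this
  rw [csOf, eastHeights, this]

lemma csOf_eq_border (u : List Bool) : csOf u = eastHeightsAux 0 (borderAux (deltaList u)) := by
  rw [borderAux_deltaList, csOf_eq]
  rfl

lemma csOf_length (u : List Bool) : (csOf u).length = u.count false := by
  rw [csOf_eq, length_ehAux]

lemma csOf_pairwise (u : List Bool) : (csOf u).Pairwise (· ≤ ·) := by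
  rw [csOf_eq]
  exact ehAux_pairwise u 1

lemma csOf_ub (u : List Bool) : ∀ c ∈ csOf u, c ≤ u.count true + 1 := by
  rw [csOf_eq]
  intro c hc
  have := ehAux_ub u 1 c hc
  omega

lemma csOf_good (u : List Bool) : Good ∅ (csOf u) :=
  ⟨csOf_pairwise u, by simp⟩

lemma sum_take_drop (l : List ℕ) (i : ℕ) : (l.take i).sum + (l.drop i).sum = l.sum := by
  rw [← List.sum_append, List.take_append_drop]

/-- The key covering criterion. -/
lemma cover_iff (u : List Bool) (i j : ℕ) (hj : j < (csOf u).length) :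
    (i < (csOf u)[j]) ↔ (u.count false - ((deltaList u).drop i).sum ≤ j) := by
  have hcp : (csOf u).countP (fun y => decide (y ≤ i)) = ((deltaList u).take i).sum := by
    rw [csOf_eq_border, countP_ehAux_borderAux]
    simp
  have hsg := sorted_getElem_le_iff (csOf u) (csOf_pairwise u) j hj i
  rw [hcp] at hsg
  have hsum := sum_take_drop (deltaList u) i
  rw [sum_deltaList] at hsum
  constructor
  · intro h
    have h2 : ¬((csOf u)[j] ≤ i) := by omega
    rw [hsg] at h2
    omega
  · intro h
    by_contra h2
    have h3 : (csOf u)[j] ≤ i := by omega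
    rw [hsg] at h3
    omega

end CTP

namespace CTP
open List

/-! ### Part B2: tableaux and r-lists -/

def deltaT {n : ℕ} (T : CatalanTableau n) (i : Fin T.k) : ℕ :=
  T.lam i - (if h : (i : ℕ) + 1 < T.k then T.lam ⟨(i : ℕ) + 1, h⟩ else 0)

lemma profile_eq {n : ℕ} (T : CatalanTableau n) :
    T.profile = (borderAux ((List.finRange T.k).map (deltaT T))).tail := by
  unfold CatalanTableau.profile
  rw [borderAux_map]
  rfl

lemma border_eq {n : ℕ} (T : CatalanTableau n) :
    borderAux ((List.finRange T.k).map (deltaT T)) = true :: T.profile := by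
  rw [profile_eq]
  obtain ⟨d, ds, hds⟩ : ∃ d ds, (List.finRange T.k).map (deltaT T) = d :: ds := by
    cases h : (List.finRange T.k).map (deltaT T) with
    | nil =>
      exfalso
      have h2 : T.k = 0 := by simpa using congrArg List.length h
      exact absurd h2 (by have := T.hk; omega)
    | cons d ds => exact ⟨d, ds, rfl⟩
  rw [hds]
  rfl

lemma map_delta_eq {n : ℕ} (T : CatalanTableau n) {u : List Bool} (hprof : T.profile = u) :
    (List.finRange T.k).map (deltaT T) = deltaList u := by
  apply borderAux_inj
  rw [border_eq, hprof, borderAux_deltaList]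

lemma k_eq {n : ℕ} (T : CatalanTableau n) {u : List Bool} (hprof : T.profile = u) :
    T.k = u.count true + 1 := by
  have h := congrArg List.length (map_delta_eq T hprof)
  simpa [length_deltaList] using h

lemma sum_drop_le (l : List ℕ) (i : ℕ) : (l.drop i).sum ≤ l.sum := by
  have := sum_take_drop l i
  omega

lemma sum_drop_anti (l : List ℕ) {i j : ℕ} (h : i ≤ j) :
    (l.drop j).sum ≤ (l.drop i).sum := by
  rw [show j = i + (j - i) by omega, ← List.drop_drop]
  exact sum_drop_le _ _

lemma drop_sum_getElem (l : List ℕ) (i : ℕ) (h : i < l.length) :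
    (l.drop i).sum = l[i] + (l.drop (i + 1)).sum := by
  rw [List.drop_eq_getElem_cons h, List.sum_cons]

lemma lam_eq_aux {n : ℕ} (T : CatalanTableau n) : ∀ (j i : ℕ), i + j = T.k →
    ((((List.finRange T.k).map (deltaT T)).drop i).sum)
      = if h : i < T.k then T.lam ⟨i, h⟩ else 0 := by
  intro j
  induction j with
  | zero =>
    intro i hi
    rw [List.drop_eq_nil_of_le (by simp; omega), dif_neg (by omega)]
    rfl
  | succ j ih =>
    intro i hi
    have hik : i < T.k := by omega
    have hlen : i < ((List.finRange T.k).map (deltaT T)).length := by simp; omega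
    rw [drop_sum_getElem _ i hlen, ih (i + 1) (by omega), dif_pos hik]
    have hget : ((List.finRange T.k).map (deltaT T))[i] = deltaT T ⟨i, hik⟩ := by
      simp
    rw [hget]
    unfold deltaT
    by_cases h1 : i + 1 < T.k
    · rw [dif_pos h1]
      have hanti : T.lam ⟨(⟨i, hik⟩ : Fin T.k).val + 1, h1⟩ ≤ T.lam ⟨i, hik⟩ :=
        T.lam_anti ⟨i, hik⟩ _ (by simp [Fin.le_def])
      omega
    · rw [dif_neg h1]
      omega

lemma lam_eq {n : ℕ} (T : CatalanTableau n) {u : List Bool} (hprof : T.profile = u)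
    (i : ℕ) (h : i < T.k) : T.lam ⟨i, h⟩ = ((deltaList u).drop i).sum := by
  have h2 := lam_eq_aux T (T.k - i) i (by omega)
  rw [map_delta_eq T hprof, dif_pos h] at h2
  exact h2.symm

lemma m_eq {n : ℕ} (T : CatalanTableau n) {u : List Bool} (hprof : T.profile = u) :
    T.m = u.count false := by
  have h1 := T.lam_first
  have h2 := lam_eq T hprof 0 T.hk
  rw [h1] at h2
  simpa [sum_deltaList] using h2

noncomputable def rowOf {n : ℕ} (T : CatalanTableau n) (j : Fin T.m) : Fin T.k :=
  (T.col_one j).choose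

lemma rowOf_spec {n : ℕ} (T : CatalanTableau n) (j : Fin T.m) :
    T.f (rowOf T j) j = true := (T.col_one j).choose_spec.1

lemma rowOf_eq {n : ℕ} (T : CatalanTableau n) {i : Fin T.k} {j : Fin T.m}
    (h : T.f i j = true) : i = rowOf T j := (T.col_one j).choose_spec.2 i h

noncomputable def rsOf {n : ℕ} (T : CatalanTableau n) : List ℕ :=
  (List.finRange T.m).map (fun j => (rowOf T j : ℕ))

lemma rsOf_length {n : ℕ} (T : CatalanTableau n) : (rsOf T).length = T.m := by simp [rsOf]

lemma rsOf_getElem {n : ℕ} (T : CatalanTableau n) (j : ℕ) (hj : j < T.m)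
    (hj' : j < (rsOf T).length) : (rsOf T)[j] = (rowOf T ⟨j, hj⟩ : ℕ) := by
  simp [rsOf]

lemma in_diagram {n : ℕ} (T : CatalanTableau n) {i : Fin T.k} {j : Fin T.m}
    (h : T.f i j = true) : T.m - T.lam i ≤ (j : ℕ) := by
  by_contra h2
  rw [T.f_outside i j (by omega)] at h
  exact Bool.noConfusion h

/-- The cover criterion in terms of a tableau with profile `u`. -/
lemma cover_iff' {n : ℕ} (T : CatalanTableau n) {u : List Bool} (hprof : T.profile = u)
    (i : Fin T.k) (j : ℕ) (hjm : j < T.m) (hj : j < (csOf u).length) :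
    ((i : ℕ) < (csOf u)[j]) ↔ (T.m - T.lam i ≤ j) := by
  rw [cover_iff u i j hj]
  have h1 : T.lam i = ((deltaList u).drop (i : ℕ)).sum := by
    have := lam_eq T hprof i.val i.isLt
    simpa using this
  rw [m_eq T hprof, h1]

lemma rsOf_valid {n : ℕ} (T : CatalanTableau n) {u : List Bool} (hprof : T.profile = u) :
    RValid ∅ (csOf u) (rsOf T) := by
  rw [rvalid_iff]
  have hm := m_eq T hprof
  have hlen : (rsOf T).length = (csOf u).length := by
    rw [rsOf_length, csOf_length, hm]
  refine ⟨hlen, ?_⟩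
  intro j h1 h2
  have hjm : j < T.m := by rw [← rsOf_length T]; exact h2
  rw [rsOf_getElem T j hjm h2]
  refine ⟨?_, by simp, ?_⟩
  · rw [cover_iff' T hprof _ j hjm h1]
    exact in_diagram T (rowOf_spec T ⟨j, hjm⟩)
  · intro j' hj1' hj2' hlt
    have hj'm : j' < T.m := by rw [← rsOf_length T]; exact hj2'
    rw [rsOf_getElem T j' hj'm hj2']
    rintro ⟨ha, hb⟩
    have hcov : T.m - T.lam (rowOf T ⟨j, hjm⟩) ≤ j' := by
      rw [← cover_iff' T hprof _ j' hj'm hj1']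
      exact hb
    have hfalse : T.f (rowOf T ⟨j, hjm⟩) ⟨j', hj'm⟩ = false := by
      cases hf : T.f (rowOf T ⟨j, hjm⟩) ⟨j', hj'm⟩ with
      | false => rfl
      | true =>
        exfalso
        have := rowOf_eq T hf
        rw [this] at ha
        exact absurd ha (lt_irrefl _)
    have := T.no_bad (rowOf T ⟨j, hjm⟩) ⟨j', hj'm⟩ hcov hfalse
    apply this
    constructor
    · exact ⟨rowOf T ⟨j', hj'm⟩, by rw [Fin.lt_def]; exact ha, rowOf_spec T _⟩
    · exact ⟨⟨j, hjm⟩, by simpa using hlt, rowOf_spec T _⟩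

/-! ### construction of a tableau from an r-list -/

lemma rs_length_of_valid {u : List Bool} {rs : List ℕ} (hrs : RValid ∅ (csOf u) rs) :
    rs.length = u.count false := by
  rw [rvalid_length _ _ _ hrs, csOf_length]

noncomputable def mkTab (n : ℕ) (u : List Bool) (hu : u.length = n) (rs : List ℕ)
    (hrs : RValid ∅ (csOf u) rs) : CatalanTableau (n + 1) where
  k := u.count true + 1
  m := u.count false
  hk := Nat.succ_pos _
  hkm := by have := count_add_count u; omega
  lam := fun i => ((deltaList u).drop (i : ℕ)).sum
  lam_le := fun i => by
    rw [← sum_deltaList]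
    exact sum_drop_le _ _
  lam_first := by simpa using sum_deltaList u
  lam_anti := fun i j hij => sum_drop_anti _ (by exact hij)
  f := fun i j => decide (rs[(j : ℕ)]'(by rw [rs_length_of_valid hrs]; exact j.isLt) = (i : ℕ))
  f_outside := by
    intro i j hj
    simp only [decide_eq_false_iff_not]
    intro heq
    have hjc : (j : ℕ) < (csOf u).length := by rw [csOf_length]; exact j.isLt
    have hjr : (j : ℕ) < rs.length := by rw [rs_length_of_valid hrs]; exact j.isLt
    have h1 := (((rvalid_iff _ _ _).mp hrs).2 (j : ℕ) hjc hjr).1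
    have hj' : (j : ℕ) < u.count false - ((deltaList u).drop (i : ℕ)).sum := hj
    have h2 : ¬((i : ℕ) < (csOf u)[(j : ℕ)]) := by
      intro hlt
      have h3 := (cover_iff u (i : ℕ) (j : ℕ) hjc).mp hlt
      omega
    omega
  col_one := by
    intro j
    have hjc : (j : ℕ) < (csOf u).length := by rw [csOf_length]; exact j.isLt
    have hjr : (j : ℕ) < rs.length := by rw [rs_length_of_valid hrs]; exact j.isLt
    have h1 := (((rvalid_iff _ _ _).mp hrs).2 (j : ℕ) hjc hjr).1
    have h2 : rs[(j : ℕ)] < u.count true + 1 :=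
      lt_of_lt_of_le h1 (csOf_ub u _ (List.getElem_mem hjc))
    refine ⟨⟨rs[(j : ℕ)], h2⟩, by simp, ?_⟩
    intro y hy
    simp only [decide_eq_true_eq] at hy
    exact Fin.ext hy.symm
  no_bad := by
    intro i j hin hfalse
    rintro ⟨⟨i', hi'lt, hi'⟩, ⟨j', hj'gt, hj'⟩⟩
    simp only [decide_eq_true_eq] at hi' hj'
    have hjc : (j : ℕ) < (csOf u).length := by rw [csOf_length]; exact j.isLt
    have hjr : (j : ℕ) < rs.length := by rw [rs_length_of_valid hrs]; exact j.isLt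
    have hj'c : (j' : ℕ) < (csOf u).length := by rw [csOf_length]; exact j'.isLt
    have hj'r : (j' : ℕ) < rs.length := by rw [rs_length_of_valid hrs]; exact j'.isLt
    have hcond := (((rvalid_iff _ _ _).mp hrs).2 (j' : ℕ) hj'c hj'r).2.2 (j : ℕ) hjc hjr
      (by exact_mod_cast hj'gt)
    apply hcond
    constructor
    · rw [hi', hj']
      exact_mod_cast hi'lt
    · rw [hj']
      rw [cover_iff u _ _ hjc]
      exact hin

lemma mkTab_profile (n : ℕ) (u : List Bool) (hu : u.length = n) (rs : List ℕ)
    (hrs : RValid ∅ (csOf u) rs) : (mkTab n u hu rs hrs).profile = u := by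
  rw [profile_eq]
  have hmap : (List.finRange (mkTab n u hu rs hrs).k).map (deltaT (mkTab n u hu rs hrs))
      = deltaList u := by
    apply List.ext_getElem
    · simpa [mkTab] using (length_deltaList u).symm
    · intro i h1 h2
      simp only [List.getElem_map, List.getElem_finRange]
      show deltaT (mkTab n u hu rs hrs) _ = _
      unfold deltaT
      have hik : i < u.count true + 1 := by simpa [mkTab, Nat.lt_succ_iff] using h1
      have hilen : i < (deltaList u).length := h2
      have hsum := drop_sum_getElem (deltaList u) i hilen
      show ((deltaList u).drop i).sum - _ = _
      simp only [Fin.coe_cast, Fin.val_mk]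
      by_cases hc : i + 1 < (mkTab n u hu rs hrs).k
      · rw [dif_pos hc]
        show _ - ((deltaList u).drop (i + 1)).sum = _
        omega
      · rw [dif_neg hc]
        have hkk : (mkTab n u hu rs hrs).k = u.count true + 1 := rfl
        rw [hkk] at hc
        have hi1 : i + 1 = u.count true + 1 := by omega
        have hlen2 : (deltaList u).length ≤ i + 1 := by rw [length_deltaList]; omega
        have : ((deltaList u).drop (i + 1)).sum = 0 := by
          rw [List.drop_eq_nil_of_le hlen2]
          rfl
        omega
  rw [hmap, borderAux_deltaList]
  rfl

lemma tableau_ext {n : ℕ} (T T' : CatalanTableau n) (hk : T.k = T'.k) (hm : T.m = T'.m)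
    (hlam : ∀ (i : ℕ) (h : i < T.k) (h' : i < T'.k), T.lam ⟨i, h⟩ = T'.lam ⟨i, h'⟩)
    (hf : ∀ (i j : ℕ) (hi : i < T.k) (hj : j < T.m) (hi' : i < T'.k) (hj' : j < T'.m),
      T.f ⟨i, hi⟩ ⟨j, hj⟩ = T'.f ⟨i, hi'⟩ ⟨j, hj'⟩) : T = T' := by
  obtain ⟨k, m, hk0, hkm, lam, lam_le, lam_first, lam_anti, f, f_outside, col_one, no_bad⟩ := T
  obtain ⟨k', m', hk0', hkm', lam', lam_le', lam_first', lam_anti', f', f_outside',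
    col_one', no_bad'⟩ := T'
  simp only at hk hm hlam hf
  subst hk
  subst hm
  have hl : lam = lam' := by
    funext i
    have := hlam i.val i.isLt i.isLt
    simpa using this
  subst hl
  have hff : f = f' := by
    funext i j
    have := hf i.val j.val i.isLt j.isLt i.isLt j.isLt
    simpa using this
  subst hff
  rfl

lemma rsOf_mkTab (n : ℕ) (u : List Bool) (hu : u.length = n) (rs : List ℕ)
    (hrs : RValid ∅ (csOf u) rs) : rsOf (mkTab n u hu rs hrs) = rs := by
  apply List.ext_getElem
  · rw [rsOf_length]
    exact (rs_length_of_valid hrs).symm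
  · intro j h1 h2
    have hjm : j < (mkTab n u hu rs hrs).m := by rw [← rsOf_length]; exact h1
    rw [rsOf_getElem _ j hjm h1]
    have hft : (mkTab n u hu rs hrs).f ⟨rs[j], by
        have hjc : j < (csOf u).length := by rw [csOf_length]; exact hjm
        exact lt_of_lt_of_le ((((rvalid_iff _ _ _).mp hrs).2 j hjc h2).1)
          (csOf_ub u _ (List.getElem_mem hjc))⟩ ⟨j, hjm⟩ = true := by
      simp [mkTab]
    have := rowOf_eq _ hft
    rw [← this]

lemma mkTab_eq {n : ℕ} (T : CatalanTableau (n + 1)) {u : List Bool} (hu : u.length = n)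
    (hprof : T.profile = u) :
    mkTab n u hu (rsOf T) (rsOf_valid T hprof) = T := by
  apply tableau_ext
  · exact (k_eq T hprof).symm
  · exact (m_eq T hprof).symm
  · intro i h h'
    exact (lam_eq T hprof i h').symm
  · intro i j hi hj hi' hj'
    show decide ((rsOf T)[j]'_ = i) = _
    rw [rsOf_getElem T j hj']
    cases hb : T.f ⟨i, hi'⟩ ⟨j, hj'⟩ with
    | true =>
      rw [← rowOf_eq T hb]
      simp
    | false =>
      simp only [decide_eq_false_iff_not]
      intro heq
      have : (⟨i, hi'⟩ : Fin T.k) = rowOf T ⟨j, hj'⟩ := Fin.ext heq.symm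
      rw [this] at hb
      rw [rowOf_spec T ⟨j, hj'⟩] at hb
      exact Bool.noConfusion hb

end CTP

namespace CTP
open List

/-! ### statistics -/

lemma nat_card_fin_subtype {m : ℕ} (p : Fin m → Prop) [DecidablePred p] :
    Nat.card {j : Fin m // p j} = (List.finRange m).countP (fun j => decide (p j)) := by
  rw [Nat.card_eq_fintype_card, Fintype.card_subtype, List.countP_eq_length_filter]
  have h1 : ((List.finRange m).filter (fun j => decide (p j))).toFinset
      = Finset.univ.filter p := by
    ext j
    simp [List.mem_filter]
  rw [← h1, List.toFinset_card_of_nodup (List.Nodup.filter _ (List.nodup_finRange m))]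

lemma onesFirstRow_eq {n : ℕ} (T : CatalanTableau n) :
    T.onesFirstRow = (rsOf T).count 0 := by
  unfold CatalanTableau.onesFirstRow
  rw [nat_card_fin_subtype]
  unfold rsOf
  show _ = ((List.finRange T.m).map (fun j => (rowOf T j : ℕ))).countP (· == 0)
  rw [List.countP_map]
  apply List.countP_congr
  intro j _
  show decide (T.f ⟨0, T.hk⟩ j = true) = true ↔ ((rowOf T j : ℕ) == 0) = true
  rw [decide_eq_true_eq, beq_iff_eq]
  constructor
  · intro hf
    exact (congrArg Fin.val (rowOf_eq T hf)).symm
  · intro h0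
    have h3 : rowOf T j = ⟨0, T.hk⟩ := Fin.ext h0
    rw [← h3]
    exact rowOf_spec T j

lemma restricted_iff {n : ℕ} (T : CatalanTableau n) {u : List Bool} (hprof : T.profile = u)
    (i : Fin T.k) (j : Fin T.m) (hj : (j : ℕ) < (csOf u).length) :
    T.Restricted i j ↔ ((rowOf T j : ℕ) < (i : ℕ) ∧ (i : ℕ) < (csOf u)[(j : ℕ)]) := by
  unfold CatalanTableau.Restricted
  constructor
  · rintro ⟨h1, h2, i', hi', hfi'⟩
    have heq := rowOf_eq T hfi'
    refine ⟨?_, ?_⟩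
    · rw [← heq]
      exact_mod_cast hi'
    · rw [cover_iff' T hprof i (j : ℕ) j.isLt hj]
      exact h1
  · rintro ⟨h1, h2⟩
    have hcov := (cover_iff' T hprof i (j : ℕ) j.isLt hj).mpr
    refine ⟨(cover_iff' T hprof i (j : ℕ) j.isLt hj).mp h2, ?_, rowOf T j, ?_, rowOf_spec T j⟩
    · cases hf : T.f i j with
      | false => rfl
      | true =>
        exfalso
        have heq := rowOf_eq T hf
        rw [← heq] at h1
        exact absurd h1 (lt_irrefl _)
    · rw [Fin.lt_def]
      exact h1

lemma exists_restricted_iff {n : ℕ} (T : CatalanTableau n) {u : List Bool}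
    (hprof : T.profile = u) (i : Fin T.k) :
    (∃ j : Fin T.m, T.Restricted i j) ↔ (i : ℕ) ∈ FS ∅ (csOf u) (rsOf T) := by
  have hlen : (rsOf T).length = (csOf u).length := by
    rw [rsOf_length, csOf_length, m_eq T hprof]
  rw [mem_FS _ _ _ hlen]
  simp only [Finset.notMem_empty, false_or]
  constructor
  · rintro ⟨j, hR⟩
    have hjc : (j : ℕ) < (csOf u).length := by
      rw [csOf_length, ← m_eq T hprof]
      exact j.isLt
    rw [restricted_iff T hprof i j hjc] at hR
    refine ⟨(j : ℕ), hjc, by rw [rsOf_length]; exact j.isLt, ?_, hR.2⟩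
    rw [rsOf_getElem T (j : ℕ) j.isLt]
    exact hR.1
  · rintro ⟨jn, h1, h2, h3, h4⟩
    have hjm : jn < T.m := by rw [← rsOf_length T]; exact h2
    refine ⟨⟨jn, hjm⟩, ?_⟩
    rw [restricted_iff T hprof i ⟨jn, hjm⟩ h1]
    rw [rsOf_getElem T jn hjm h2] at h3
    exact ⟨h3, h4⟩

lemma card_filter_mem (k : ℕ) (S : Finset ℕ) (hS : ∀ x ∈ S, x < k) :
    (Finset.univ.filter (fun i : Fin k => (i : ℕ) ∈ S)).card = S.card := by
  rw [← Finset.card_image_of_injective _ Fin.val_injective]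
  congr 1
  ext x
  simp only [Finset.mem_image, Finset.mem_filter, Finset.mem_univ, true_and]
  constructor
  · rintro ⟨i, hi, rfl⟩
    exact hi
  · intro hx
    exact ⟨⟨x, hS x hx⟩, hx, rfl⟩

lemma FS_mem_bound {u : List Bool} {rs : List ℕ} (hlen : rs.length = (csOf u).length) :
    ∀ x ∈ FS ∅ (csOf u) rs, 0 < x ∧ x < u.count true + 1 := by
  intro x hx
  rw [mem_FS _ _ _ hlen] at hx
  rcases hx with h | ⟨j, h1, h2, h3, h4⟩
  · simp at h
  · have h5 : (csOf u)[j] ≤ u.count true + 1 := csOf_ub u _ (List.getElem_mem h1)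
    omega

lemma FS_card_le {u : List Bool} {rs : List ℕ} (hlen : rs.length = (csOf u).length) :
    (FS ∅ (csOf u) rs).card ≤ u.count true := by
  have hsub : FS ∅ (csOf u) rs ⊆ Finset.Ioo 0 (u.count true + 1) := by
    intro x hx
    simp only [Finset.mem_Ioo]
    exact FS_mem_bound hlen x hx
  have := Finset.card_le_card hsub
  simpa using this

lemma unrestricted_eq {n : ℕ} (T : CatalanTableau n) {u : List Bool} (hprof : T.profile = u) :
    T.unrestrictedRows = T.k - (FS ∅ (csOf u) (rsOf T)).card := by
  classical
  unfold CatalanTableau.unrestrictedRows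
  have h1 : ∀ i : Fin T.k, (∀ j, ¬ T.Restricted i j) ↔ ¬ ((i : ℕ) ∈ FS ∅ (csOf u) (rsOf T)) := by
    intro i
    rw [← exists_restricted_iff T hprof i]
    exact not_exists.symm
  rw [Nat.card_congr (Equiv.subtypeEquivRight h1), Nat.card_eq_fintype_card,
    Fintype.card_subtype_compl, Fintype.card_fin, Fintype.card_subtype]
  congr 1
  apply card_filter_mem
  intro x hx
  have hlen : (rsOf T).length = (csOf u).length := by
    rw [rsOf_length, csOf_length, m_eq T hprof]
  have h2 := FS_mem_bound hlen x hx
  rw [k_eq T hprof]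
  omega

end CTP

/-- For every integer `n ≥ 1`, every word `u` of length `n` over
`{a, b}`, and all integers `f ≥ 0` and `g ≥ 0`, the number of Catalan tableaux
of index `n + 1` with profile `u`, exactly `f` ones in the first row, and
exactly `g + 1` unrestricted rows equals the number of lattice paths `η` weakly
below `ω_u` that have exactly `f` horizontal contacts with `ω_u` and exactly `g`
trailing north steps. -/
theorem card_catalanTableau_refined_eq_card_paths_refined
    (n : ℕ) (hn : 1 ≤ n) (u : List Bool) (hu : u.length = n) (f g : ℕ) :
    Nat.card {T : CatalanTableau (n + 1) //
        T.profile = u ∧ T.onesFirstRow = f ∧ T.unrestrictedRows = g + 1} =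
      Nat.card {η : List Bool //
        weaklyBelow u η ∧ contacts u η = f ∧ trailingNorth η = g} := by
  classical
  -- the three building-block equivalences
  let Φ : {T : CatalanTableau (n + 1) // T.profile = u} ≃
      {rs : List ℕ // CTP.RValid ∅ (CTP.csOf u) rs} :=
    { toFun := fun x => ⟨CTP.rsOf x.1, CTP.rsOf_valid x.1 x.2⟩
      invFun := fun x => ⟨CTP.mkTab n u hu x.1 x.2, CTP.mkTab_profile n u hu x.1 x.2⟩
      left_inv := fun x => Subtype.ext (CTP.mkTab_eq x.1 hu x.2)
      right_inv := fun x => Subtype.ext (CTP.rsOf_mkTab n u hu x.1 x.2) }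
  have hcard0 : (∅ : Finset ℕ).card = 0 := Finset.card_empty
  let Ψ : {rs : List ℕ // CTP.RValid ∅ (CTP.csOf u) rs} ≃
      {es : List ℕ // CTP.EValid 0 (CTP.csOf u) es} :=
    { toFun := fun x => ⟨CTP.toE ∅ (CTP.csOf u) x.1, by
        have h := (CTP.toE_spec (CTP.csOf u) ∅ x.1 (CTP.csOf_good u) x.2).1
        rwa [hcard0] at h⟩
      invFun := fun x => ⟨CTP.toR ∅ (CTP.csOf u) x.1,
        (CTP.toR_spec (CTP.csOf u) ∅ x.1 (CTP.csOf_good u) (by simpa using x.2)).1⟩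
      left_inv := fun x => Subtype.ext
        ((CTP.toE_spec (CTP.csOf u) ∅ x.1 (CTP.csOf_good u) x.2).2)
      right_inv := fun x => Subtype.ext
        ((CTP.toR_spec (CTP.csOf u) ∅ x.1 (CTP.csOf_good u) (by simpa using x.2)).2) }
  let Θ : {es : List ℕ // CTP.EValid 0 (CTP.csOf u) es} ≃
      {η : List Bool // weaklyBelow u η} :=
    { toFun := fun x => ⟨CTP.pathOf 0 (u.count true) x.1, CTP.weaklyBelow_pathOf x.2⟩
      invFun := fun x => ⟨eastHeights x.1, ((CTP.weaklyBelow_iff_evalid u x.1).mp x.2).2.2⟩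
      left_inv := fun x => Subtype.ext (CTP.eastHeights_pathOf x.2)
      right_inv := fun x => Subtype.ext (CTP.pathOf_eastHeights_self x.2) }
  let E := Φ.trans (Ψ.trans Θ)
  -- statistics transport
  have hstat : ∀ x : {T : CatalanTableau (n + 1) // T.profile = u},
      (x.1.onesFirstRow = f ∧ x.1.unrestrictedRows = g + 1) ↔
        (contacts u (E x).1 = f ∧ trailingNorth (E x).1 = g) := by
    rintro ⟨T, hprof⟩
    have hEx : (E ⟨T, hprof⟩).1
        = CTP.pathOf 0 (u.count true) (CTP.toE ∅ (CTP.csOf u) (CTP.rsOf T)) := rfl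
    have hEv : CTP.EValid 0 (CTP.csOf u) (CTP.toE ∅ (CTP.csOf u) (CTP.rsOf T)) := by
      have h := (CTP.toE_spec (CTP.csOf u) ∅ (CTP.rsOf T) (CTP.csOf_good u)
        (CTP.rsOf_valid T hprof)).1
      rwa [hcard0] at h
    have hlen : (CTP.rsOf T).length = (CTP.csOf u).length := by
      rw [CTP.rsOf_length, CTP.csOf_length, CTP.m_eq T hprof]
    have hcont : contacts u (E ⟨T, hprof⟩).1 = T.onesFirstRow := by
      rw [hEx, CTP.contacts_eq_countP, CTP.eastHeights_pathOf hEv,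
        CTP.onesFirstRow_eq T]
      exact (CTP.count_zero_toE (CTP.csOf u) ∅ (CTP.rsOf T) (CTP.csOf_good u)
        (CTP.rsOf_valid T hprof)).symm
    have htrail : trailingNorth (E ⟨T, hprof⟩).1
        = u.count true - (CTP.FS ∅ (CTP.csOf u) (CTP.rsOf T)).card := by
      rw [hEx, CTP.trailing_eq hEv]
      congr 1
      have h := CTP.getLastD_toE (CTP.csOf u) ∅ (CTP.rsOf T) hlen
      rwa [hcard0] at h
    have hunr : T.unrestrictedRows
        = T.k - (CTP.FS ∅ (CTP.csOf u) (CTP.rsOf T)).card := CTP.unrestricted_eq T hprof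
    have hk : T.k = u.count true + 1 := CTP.k_eq T hprof
    have hFS : (CTP.FS ∅ (CTP.csOf u) (CTP.rsOf T)).card ≤ u.count true :=
      CTP.FS_card_le hlen
    rw [hcont, htrail, hunr, hk]
    constructor
    · rintro ⟨h1, h2⟩
      exact ⟨h1, by omega⟩
    · rintro ⟨h1, h2⟩
      exact ⟨h1, by omega⟩
  exact Nat.card_congr
    (((Equiv.subtypeSubtypeEquivSubtypeInter _ _).symm).trans
      ((E.subtypeEquiv hstat).trans (Equiv.subtypeSubtypeEquivSubtypeInter _ _)))
end

section
/- For every integer n ≥ 1, every word u of length n over {a,b}, and all integers f ≥ 0 and g ≥ 0, the number of binary trees with n+1 vertices with canopy u whose left branch has length f+1 and whose right branch has length g+1 equals the number of lattice paths η weakly below ω_u that have exactly f horizontal contacts with ω_u and exactly g trailing north steps. -/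
section Aux
open List

/-! ### Generic cardinality helpers -/

lemma aux_card_bij' {α β : Type*} {P : α → Prop} {Q : β → Prop} (F : α → β)
    (hQ : ∀ a, P a → Q (F a))
    (hinj : ∀ a₁ a₂, P a₁ → P a₂ → F a₁ = F a₂ → a₁ = a₂)
    (hsurj : ∀ b, Q b → ∃ a, P a ∧ F a = b) :
    Nat.card {a // P a} = Nat.card {b // Q b} := by
  refine Nat.card_congr (Equiv.ofBijective (fun x => ⟨F x.1, hQ _ x.2⟩) ⟨?_, ?_⟩)
  · rintro ⟨a₁, h₁⟩ ⟨a₂, h₂⟩ h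
    exact Subtype.ext (hinj a₁ a₂ h₁ h₂ (congrArg Subtype.val h))
  · rintro ⟨b, hb⟩
    obtain ⟨a, ha, rfl⟩ := hsurj b hb
    exact ⟨⟨a, ha⟩, rfl⟩

lemma aux_card_split {α : Type*} (P : α → Prop) (s : α → ℕ) (G : ℕ)
    [Finite {a // P a ∧ s a = G}] [Finite {a // P a ∧ G + 1 ≤ s a}] :
    Nat.card {a // P a ∧ G ≤ s a} =
      Nat.card {a // P a ∧ s a = G} + Nat.card {a // P a ∧ G + 1 ≤ s a} := by
  rw [← Nat.card_sum]
  refine Nat.card_congr ⟨fun x => if h : s x.1 = G then .inl ⟨x.1, x.2.1, h⟩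
      else .inr ⟨x.1, x.2.1, lt_of_le_of_ne x.2.2 (Ne.symm h)⟩,
    fun y => y.elim (fun z => ⟨z.1, z.2.1, z.2.2.ge⟩)
      (fun z => ⟨z.1, z.2.1, le_trans (Nat.le_succ G) z.2.2⟩), ?_, ?_⟩
  · rintro ⟨a, ha⟩
    by_cases h : s a = G <;> simp [h]
  · rintro (⟨a, ha⟩ | ⟨a, ha⟩)
    · simp [ha.2]
    · have : ¬ (s a = G) := by omega
      simp [this]

lemma aux_finite_list (k : ℕ) (P : List Bool → Prop) (hP : ∀ l, P l → l.length = k) :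
    Finite {l : List Bool // P l} := by
  refine Finite.of_injective (fun x => (fun i : Fin k => x.1.getD i false)) ?_
  rintro ⟨l₁, h₁⟩ ⟨l₂, h₂⟩ h
  have hl₁ := hP _ h₁; have hl₂ := hP _ h₂
  have hl : l₁ = l₂ := by
    refine List.ext_getElem (by omega) ?_
    intro n hn₁ hn₂
    have h2 : l₁.getD n false = l₂.getD n false := congrFun h ⟨n, by omega⟩
    rwa [List.getD_eq_getElem _ _ hn₁, List.getD_eq_getElem _ _ hn₂] at h2
  exact Subtype.ext hl

/-! ### counts -/

lemma aux_count_add (l : List Bool) : l.count true + l.count false = l.length := by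
  induction l with
  | nil => rfl
  | cons a l ih => cases a <;> simp [List.count_cons] <;> omega

lemma aux_count_take_ge (l : List Bool) (t : ℕ) :
    l.count true ≤ (l.take t).count true + (l.length - t) := by
  conv_lhs => rw [← List.take_append_drop t l]
  rw [List.count_append]
  have h1 : (l.drop t).count true ≤ l.length - t := by
    simpa using List.count_le_length (l := l.drop t) (a := true)
  omega

/-! ### eastHeights -/

lemma aux_eha_append (c : ℕ) (w₁ w₂ : List Bool) :
    eastHeightsAux c (w₁ ++ w₂) =
      eastHeightsAux c w₁ ++ eastHeightsAux (c + w₁.count true) w₂ := by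
  induction w₁ generalizing c with
  | nil => simp [eastHeightsAux]
  | cons a w ih =>
    cases a <;> simp [eastHeightsAux, ih, List.count_cons] <;> ring_nf
  
lemma aux_eha_replicate (c g : ℕ) : eastHeightsAux c (List.replicate g true) = [] := by
  induction g generalizing c with
  | zero => rfl
  | succ g ih => simp [List.replicate_succ, eastHeightsAux, ih]

lemma aux_length_eha (c : ℕ) (w : List Bool) :
    (eastHeightsAux c w).length = w.count false := by
  induction w generalizing c with
  | nil => rfl
  | cons a w ih => cases a <;> simp [eastHeightsAux, ih, List.count_cons]

/-! ### trailingNorth -/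

lemma aux_tn_le_length (l : List Bool) : trailingNorth l ≤ l.length := by
  unfold trailingNorth
  calc (l.reverse.takeWhile (· == true)).length ≤ l.reverse.length :=
        List.Sublist.length_le (List.takeWhile_sublist _)
  _ = l.length := List.length_reverse (as := l)

lemma aux_tn_append_true (l : List Bool) :
    trailingNorth (l ++ [true]) = trailingNorth l + 1 := by
  simp [trailingNorth, List.takeWhile]

lemma aux_tw_rep (g : ℕ) (l : List Bool) :
    ((List.replicate g true ++ l).takeWhile (· == true))
      = List.replicate g true ++ l.takeWhile (· == true) := by
  induction g with
  | zero => simp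
  | succ g ih => simp [List.replicate_succ, List.takeWhile_cons, ih]

lemma aux_tn_ztail (ζ : List Bool) (g : ℕ) :
    trailingNorth (ζ ++ false :: List.replicate g true) = g := by
  simp [trailingNorth, aux_tw_rep, List.takeWhile_cons]

lemma aux_tn_pos {η : List Bool} (h : 1 ≤ trailingNorth η) :
    ∃ η', η = η' ++ [true] := by
  rcases hrev : η.reverse with _ | ⟨b, l⟩
  · simp [trailingNorth, hrev] at h
  · cases b with
    | false => simp [trailingNorth, hrev, List.takeWhile_cons] at h
    | true =>
      refine ⟨l.reverse, ?_⟩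
      have := congrArg List.reverse hrev
      simpa using this

lemma aux_tn_decomp {η : List Bool} {g : ℕ} (h : trailingNorth η = g) (hlt : g < η.length) :
    ∃ ζ, η = ζ ++ false :: List.replicate g true := by
  have htw : η.reverse.takeWhile (· == true) = List.replicate g true := by
    rw [List.eq_replicate_iff]
    refine ⟨h, fun b hb => ?_⟩
    have := List.mem_takeWhile_imp hb
    simpa using this
  have hdw : η.reverse.dropWhile (· == true) ≠ [] := by
    intro hnil
    have := List.takeWhile_append_dropWhile (p := (· == true)) (l := η.reverse)
    rw [hnil, htw] at this
    have : η.reverse.length = g := by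
      rw [← this]; simp
    simp at this; omega
  rcases hd : η.reverse.dropWhile (· == true) with _ | ⟨b, l⟩
  · exact absurd hd hdw
  · have hsplit := List.takeWhile_append_dropWhile (p := (· == true)) (l := η.reverse)
    rw [htw, hd] at hsplit
    have hb : b = false := by
      cases b with
      | false => rfl
      | true =>
        exfalso
        have h1 : η.reverse.takeWhile (· == true) =
            List.replicate g true ++ (true :: l).takeWhile (· == true) := by
          rw [← hsplit]; exact aux_tw_rep g (true :: l)
        rw [htw, List.takeWhile_cons] at h1
        have := congrArg List.length h1
        simp at this
    refine ⟨l.reverse, ?_⟩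
    rw [hb] at hsplit
    have := congrArg List.reverse hsplit
    simpa [List.reverse_append] using this.symm

lemma aux_tn_ge_decomp {η : List Bool} {g : ℕ} (h : g ≤ trailingNorth η) :
    ∃ ζ, η = ζ ++ List.replicate g true := by
  induction g generalizing η with
  | zero => exact ⟨η, by simp⟩
  | succ g ih =>
    obtain ⟨η', rfl⟩ := aux_tn_pos (le_trans (by omega) h)
    rw [aux_tn_append_true] at h
    obtain ⟨ζ, hζ⟩ := ih (by omega : g ≤ trailingNorth η')
    exact ⟨ζ, by rw [hζ, List.replicate_succ' , List.append_assoc]⟩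

end Aux
section Aux2
open List

lemma aux_wb_true {u η : List Bool} :
    weaklyBelow (u ++ [true]) (η ++ [true]) ↔ weaklyBelow u η := by
  constructor
  · rintro ⟨hlen, hcnt, hpre⟩
    simp only [List.length_append, List.length_singleton] at hlen
    simp only [List.count_append] at hcnt
    refine ⟨by omega, by simpa using hcnt, fun t => ?_⟩
    by_cases ht : t ≤ η.length
    · have h1 := hpre t
      rwa [List.take_append_of_le_length ht,
        List.take_append_of_le_length (by omega)] at h1
    · rw [List.take_of_length_le (by omega), List.take_of_length_le (by omega)]
      simp only [List.count_singleton'] at hcnt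
      omega
  · rintro ⟨hlen, hcnt, hpre⟩
    refine ⟨by simp [hlen], by simp [List.count_append, hcnt], fun t => ?_⟩
    by_cases ht : t ≤ η.length
    · rw [List.take_append_of_le_length ht, List.take_append_of_le_length (by omega)]
      exact hpre t
    · rw [List.take_of_length_le (by simp; omega), List.take_of_length_le (by simp; omega)]
      simp [List.count_append, hcnt]

lemma aux_wb_false {u' ζ : List Bool} {g : ℕ} :
    weaklyBelow (u' ++ [false]) (ζ ++ false :: List.replicate g true) ↔
      weaklyBelow u' (ζ ++ List.replicate g true) := by
  have hcrep : (List.replicate g true).count true = g := by simp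
  have hcrepf : (false :: List.replicate g true).count true = g := by
    simp [List.count_cons]
  constructor
  · rintro ⟨hlen, hcnt, hpre⟩
    simp at hlen
    rw [List.count_append, List.count_append, hcrepf] at hcnt
    simp at hcnt
    have hL : ζ.length + g = u'.length := by omega
    have hc : ζ.count true + g = u'.count true := hcnt
    refine ⟨by simp; omega, by rw [List.count_append, hcrep]; omega, fun t => ?_⟩

    by_cases ht : t ≤ ζ.length
    · have h1 := hpre t
      rw [List.take_append_of_le_length ht,
        List.take_append_of_le_length (by omega)] at h1
      rwa [List.take_append_of_le_length ht]
    · -- automatic regime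
      have hdrop : (ζ ++ List.replicate g true).drop t =
          List.replicate (g - (t - ζ.length)) true := by
        rw [List.drop_append, List.drop_of_length_le (by omega),
          List.drop_replicate]
        simp
      have h2 : ((ζ ++ List.replicate g true).take t).count true +
          ((ζ ++ List.replicate g true).drop t).count true =
          ζ.count true + g := by
        rw [← List.count_append, List.take_append_drop, List.count_append, hcrep]
      rw [hdrop] at h2
      simp only [List.count_replicate, beq_self_eq_true, if_pos] at h2
      have h3 := aux_count_take_ge u' t
      omega
  · rintro ⟨hlen, hcnt, hpre⟩
    simp at hlen
    rw [List.count_append, hcrep] at hcnt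
    have hL : ζ.length + g = u'.length := by omega
    have hc : ζ.count true + g = u'.count true := hcnt
    refine ⟨by simp; omega, ?_, fun t => ?_⟩
    · rw [List.count_append, List.count_append, hcrepf]
      simp; omega
    by_cases ht : t ≤ ζ.length
    · have h1 := hpre t
      rw [List.take_append_of_le_length ht] at h1
      rw [List.take_append_of_le_length ht, List.take_append_of_le_length (by omega)]
      exact h1
    · set η : List Bool := ζ ++ false :: List.replicate g true with hη
      have hdrop : η.drop t = List.replicate (g - (t - ζ.length - 1)) true := by
        rw [hη, List.drop_append, List.drop_of_length_le (by omega)]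
        have h4 : t - ζ.length = (t - ζ.length - 1) + 1 := by omega
        rw [h4, List.nil_append, List.drop_succ_cons, List.drop_replicate]
        simp only [Nat.add_sub_cancel]
      have h2 : (η.take t).count true + (η.drop t).count true = ζ.count true + g := by
        rw [← List.count_append, List.take_append_drop, hη, List.count_append, hcrepf]
      rw [hdrop] at h2
      simp only [List.count_replicate, beq_self_eq_true, if_pos] at h2
      have h3 := aux_count_take_ge (u' ++ [false]) t
      rw [List.count_append] at h3
      simp at h3
      omega

lemma aux_contacts_true (u η : List Bool) :
    contacts (u ++ [true]) (η ++ [true]) = contacts u η := by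
  unfold contacts eastHeights
  rw [aux_eha_append, aux_eha_append]
  simp [eastHeightsAux]

lemma aux_eha_ztail (c g : ℕ) : eastHeightsAux c (false :: List.replicate g true) = [c] := by
  simp [eastHeightsAux, aux_eha_replicate]

lemma aux_contacts_false {u' ζ : List Bool} (g : ℕ) (hcf : ζ.count false = u'.count false) :
    contacts (u' ++ [false]) (ζ ++ false :: List.replicate g true) =
      contacts u' (ζ ++ List.replicate g true) +
        (if u'.count true = ζ.count true then 1 else 0) := by
  unfold contacts eastHeights
  rw [aux_eha_append, aux_eha_append, aux_eha_append]
  rw [aux_eha_ztail, aux_eha_replicate]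
  simp only [eastHeightsAux, List.append_nil]
  rw [List.zip_append (by rw [aux_length_eha, aux_length_eha, hcf])]
  rw [List.countP_append]
  simp only [List.countP_cons, List.countP_nil, Nat.zero_add, Nat.add_right_cancel_iff]
  by_cases h : u'.count true = ζ.count true <;> simp [h]

end Aux2
section Aux3
open BinTree

def auxAddR : BinTree → BinTree
  | .nil => .node .nil .nil
  | .node l r => .node l (auxAddR r)

def auxRemR : BinTree → BinTree
  | .nil => .nil
  | .node l r => if r = .nil then l else .node l (auxRemR r)

def auxIns : BinTree → ℕ → BinTree
  | B, 0 => .node B .nil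
  | .nil, _ + 1 => .node .nil .nil
  | .node l r, j + 1 => .node l (auxIns r j)

lemma aux_last_ne {x y : Bool} {a b : List Bool} (h : a ++ [x] = b ++ [y]) : x = y := by
  have := congrArg List.getLast? h
  simpa [List.getLast?_concat] using this

lemma aux_size_eq_zero {B : BinTree} : B.size = 0 ↔ B = .nil := by
  cases B <;> simp [BinTree.size]

lemma aux_cf_length (B : BinTree) : B.canopyFull.length = B.size := by
  induction B with
  | nil => rfl
  | node l r ihl ihr => simp [BinTree.canopyFull, BinTree.size, ihl, ihr]; omega

lemma aux_rbl_le_size (B : BinTree) : B.rightBranchLen ≤ B.size := by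
  induction B with
  | nil => simp [BinTree.rightBranchLen, BinTree.size]
  | node l r ihl ihr => simp [BinTree.rightBranchLen, BinTree.size]; omega

lemma aux_lbl_eq_zero {B : BinTree} : B.leftBranchLen = 0 ↔ B = .nil := by
  cases B <;> simp [BinTree.leftBranchLen]

lemma aux_rbl_eq_zero {B : BinTree} : B.rightBranchLen = 0 ↔ B = .nil := by
  cases B <;> simp [BinTree.rightBranchLen]

lemma aux_cf_decomp {B : BinTree} (h : B ≠ .nil) : ∃ w, B.canopyFull = w ++ [false] := by
  induction B with
  | nil => exact absurd rfl h
  | node l r ihl ihr =>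
    by_cases hr : r = .nil
    · subst hr
      exact ⟨l.canopyFull, by simp [BinTree.canopyFull]⟩
    · obtain ⟨w', hw'⟩ := ihr hr
      exact ⟨l.canopyFull ++ true :: w', by
        simp [BinTree.canopyFull, hr, hw']⟩

lemma aux_cf_last {B : BinTree} (h : B ≠ .nil) : B.canopyFull = B.canopy ++ [false] := by
  obtain ⟨w, hw⟩ := aux_cf_decomp h
  rw [BinTree.canopy, hw, List.dropLast_concat]

lemma aux_canopy_node_nil (l : BinTree) : (BinTree.node l .nil).canopy = l.canopyFull := by
  simp [BinTree.canopy, BinTree.canopyFull, List.dropLast_concat]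

lemma aux_canopy_node {l r : BinTree} (h : r ≠ .nil) :
    (BinTree.node l r).canopy = l.canopyFull ++ true :: r.canopy := by
  rw [BinTree.canopy, BinTree.canopyFull]
  rw [aux_cf_last h]
  have : l.canopyFull ++ (decide (r ≠ BinTree.nil)) :: (r.canopy ++ [false]) =
      (l.canopyFull ++ true :: r.canopy) ++ [false] := by
    simp [h]
  rw [this, List.dropLast_concat]

lemma aux_cf_len_one {B : BinTree} (h : B.canopyFull.length = 1) : B = .node .nil .nil := by
  rw [aux_cf_length] at h
  cases B with
  | nil => simp [BinTree.size] at h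
  | node l r =>
    simp only [BinTree.size] at h
    have hl : l.size = 0 := by omega
    have hr : r.size = 0 := by omega
    rw [aux_size_eq_zero.mp hl, aux_size_eq_zero.mp hr]

lemma aux_addR_ne_nil (B : BinTree) : auxAddR B ≠ .nil := by
  cases B <;> simp [auxAddR]

lemma aux_size_addR (B : BinTree) : (auxAddR B).size = B.size + 1 := by
  induction B with
  | nil => rfl
  | node l r ihl ihr => simp [auxAddR, BinTree.size, ihr]; omega

lemma aux_rbl_addR (B : BinTree) : (auxAddR B).rightBranchLen = B.rightBranchLen + 1 := by
  induction B with
  | nil => rfl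
  | node l r ihl ihr => simp [auxAddR, BinTree.rightBranchLen, ihr]

lemma aux_lbl_addR {B : BinTree} (h : B ≠ .nil) :
    (auxAddR B).leftBranchLen = B.leftBranchLen := by
  cases B with
  | nil => exact absurd rfl h
  | node l r => simp [auxAddR, BinTree.leftBranchLen]

lemma aux_cf_addR {B : BinTree} (h : B ≠ .nil) :
    (auxAddR B).canopyFull = B.canopy ++ [true, false] := by
  induction B with
  | nil => exact absurd rfl h
  | node l r ihl ihr =>
    by_cases hr : r = .nil
    · subst hr
      show (BinTree.node l (auxAddR .nil)).canopyFull = _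
      rw [aux_canopy_node_nil]
      simp [auxAddR, BinTree.canopyFull]
    · show (BinTree.node l (auxAddR r)).canopyFull = _
      rw [BinTree.canopyFull, ihr hr, aux_canopy_node hr]
      simp [aux_addR_ne_nil]

lemma aux_canopy_addR {B : BinTree} (h : B ≠ .nil) :
    (auxAddR B).canopy = B.canopy ++ [true] := by
  rw [BinTree.canopy, aux_cf_addR h]
  have : B.canopy ++ [true, false] = (B.canopy ++ [true]) ++ [false] := by simp
  rw [this, List.dropLast_concat]

lemma aux_remR_addR (B : BinTree) : auxRemR (auxAddR B) = B := by
  induction B with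
  | nil => simp [auxAddR, auxRemR]
  | node l r ihl ihr =>
    show auxRemR (.node l (auxAddR r)) = _
    rw [auxRemR, if_neg (aux_addR_ne_nil r), ihr]

lemma aux_size_remR {B : BinTree} (h : B ≠ .nil) : (auxRemR B).size + 1 = B.size := by
  induction B with
  | nil => exact absurd rfl h
  | node l r ihl ihr =>
    by_cases hr : r = .nil
    · subst hr; simp [auxRemR, BinTree.size]
    · rw [auxRemR, if_neg hr]
      simp only [BinTree.size]
      have := ihr hr
      omega

lemma aux_K1 {B : BinTree} (h : B ≠ .nil) :
    ∀ w, B.canopy = w ++ [true] → auxAddR (auxRemR B) = B := by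
  induction B with
  | nil => exact absurd rfl h
  | node l r ihl ihr =>
    intro w hw
    by_cases hr : r = .nil
    · subst hr
      rw [aux_canopy_node_nil] at hw
      by_cases hl : l = .nil
      · subst hl; simp [BinTree.canopyFull] at hw
      · rw [aux_cf_last hl] at hw
        exact absurd (aux_last_ne hw.symm) (by simp)
    · rw [aux_canopy_node hr] at hw
      rcases List.eq_nil_or_concat r.canopy with hc | ⟨w₂, x, hc⟩
    
      · -- r = node nil nil
        have hr1 : r = .node .nil .nil := by
          apply aux_cf_len_one
          rw [aux_cf_last hr, hc]
          rfl
        subst hr1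
        rw [auxRemR, if_neg hr]
        have : auxRemR (BinTree.node .nil .nil) = .nil := by simp [auxRemR]
        rw [this]
        show BinTree.node l (auxAddR .nil) = _
        rfl
      · rw [List.concat_eq_append] at hc
        rw [hc] at hw
        have hx : x = true := by
          have h2 : (l.canopyFull ++ true :: w₂) ++ [x] = w ++ [true] := by
            rw [← hw]; simp
          exact aux_last_ne h2
        subst hx
        have hrec := ihr hr w₂ hc
        rw [auxRemR, if_neg hr]
        show BinTree.node l (auxAddR (auxRemR r)) = _
        rw [hrec]

lemma aux_ins_ne_nil (B : BinTree) (j : ℕ) : auxIns B j ≠ .nil := by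
  rcases j with _ | j
  · cases B <;> simp [auxIns]
  · cases B <;> simp [auxIns]

lemma aux_size_ins (B : BinTree) (j : ℕ) : (auxIns B j).size = B.size + 1 := by
  induction j generalizing B with
  | zero => simp [auxIns, BinTree.size]
  | succ j ih =>
    cases B with
    | nil => simp [auxIns, BinTree.size]
    | node l r => simp [auxIns, BinTree.size, ih]; omega

lemma aux_rbl_ins {B : BinTree} {j : ℕ} (h : j ≤ B.rightBranchLen) :
    (auxIns B j).rightBranchLen = j + 1 := by
  induction j generalizing B with
  | zero => simp [auxIns, BinTree.rightBranchLen]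
  | succ j ih =>
    cases B with
    | nil => simp [BinTree.rightBranchLen] at h
    | node l r =>
      simp only [BinTree.rightBranchLen] at h
      show (BinTree.node l (auxIns r j)).rightBranchLen = _
      rw [BinTree.rightBranchLen, ih (by omega)]

lemma aux_lbl_ins {B : BinTree} {j : ℕ} (h : j ≤ B.rightBranchLen) :
    (auxIns B j).leftBranchLen = B.leftBranchLen + (if j = 0 then 1 else 0) := by
  rcases j with _ | j
  · simp [auxIns, BinTree.leftBranchLen]
  · cases B with
    | nil => simp [BinTree.rightBranchLen] at h
    | node l r => simp [auxIns, BinTree.leftBranchLen]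

lemma aux_cf_ins {B : BinTree} {j : ℕ} (h : j < B.rightBranchLen) :
    (auxIns B j).canopyFull = B.canopyFull ++ [false] := by
  induction j generalizing B with
  | zero => simp [auxIns, BinTree.canopyFull]
  | succ j ih =>
    cases B with
    | nil => simp [BinTree.rightBranchLen] at h
    | node l r =>
      simp only [BinTree.rightBranchLen] at h
      have hr : r ≠ .nil := by
        intro hr; rw [hr] at h; simp [BinTree.rightBranchLen] at h
      show (BinTree.node l (auxIns r j)).canopyFull = _
      rw [BinTree.canopyFull, BinTree.canopyFull, ih (by omega)]
      simp [aux_ins_ne_nil, hr]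

lemma aux_remR_ins (B : BinTree) (j : ℕ) : auxRemR (auxIns B j) = B := by
  induction j generalizing B with
  | zero => simp [auxIns, auxRemR]
  | succ j ih =>
    cases B with
    | nil => simp [auxIns, auxRemR]
    | node l r =>
      show auxRemR (.node l (auxIns r j)) = _
      rw [auxRemR, if_neg (aux_ins_ne_nil r j), ih]

lemma aux_K2 {B : BinTree} (h : B ≠ .nil) :
    ∀ w, B.canopy = w ++ [false] →
      auxIns (auxRemR B) (B.rightBranchLen - 1) = B ∧
        B.rightBranchLen ≤ (auxRemR B).rightBranchLen := by
  induction B with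
  | nil => exact absurd rfl h
  | node l r ihl ihr =>
    intro w hw
    by_cases hr : r = .nil
    · subst hr
      rw [aux_canopy_node_nil] at hw
      have hl : l ≠ .nil := by
        intro hl; rw [hl] at hw; simp [BinTree.canopyFull] at hw
      rw [auxRemR, if_pos rfl]
      constructor
      · simp [BinTree.rightBranchLen, auxIns]
      · simp only [BinTree.rightBranchLen]
        have : l.rightBranchLen ≠ 0 := fun hc => hl (aux_rbl_eq_zero.mp hc)
        omega
    · rw [aux_canopy_node hr] at hw
      rcases List.eq_nil_or_concat r.canopy with hc | ⟨w₂, x, hc⟩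
      · exfalso
        rw [hc] at hw
        have h2 : (l.canopyFull) ++ [true] = w ++ [false] := by rw [← hw]
        exact absurd (aux_last_ne h2) (by simp)
      · rw [List.concat_eq_append] at hc
        rw [hc] at hw
        have hx : x = false := by
          have h2 : (l.canopyFull ++ true :: w₂) ++ [x] = w ++ [false] := by
            rw [← hw]; simp
          exact aux_last_ne h2
        subst hx
        obtain ⟨hrec1, hrec2⟩ := ihr hr w₂ hc
        have hrbl : r.rightBranchLen ≠ 0 := fun hcc => hr (aux_rbl_eq_zero.mp hcc)
        rw [auxRemR, if_neg hr]
        constructor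
        · simp only [BinTree.rightBranchLen, Nat.add_sub_cancel]
          have : r.rightBranchLen = (r.rightBranchLen - 1) + 1 := by omega
          rw [this]
          show BinTree.node l (auxIns (auxRemR r) (r.rightBranchLen - 1)) = _
          rw [hrec1]
        · simp only [BinTree.rightBranchLen]
          omega

def auxEnc : BinTree → List Bool
  | .nil => [false]
  | .node l r => true :: (auxEnc l ++ auxEnc r)

lemma aux_enc_inj : ∀ B₁ B₂ : BinTree, ∀ t₁ t₂ : List Bool,
    auxEnc B₁ ++ t₁ = auxEnc B₂ ++ t₂ → B₁ = B₂ ∧ t₁ = t₂ := by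
  intro B₁
  induction B₁ with
  | nil =>
    intro B₂ t₁ t₂ h
    cases B₂ with
    | nil => simpa [auxEnc] using h
    | node l r => simp [auxEnc] at h
  | node l r ihl ihr =>
    intro B₂ t₁ t₂ h
    cases B₂ with
    | nil => simp [auxEnc] at h
    | node l' r' =>
      simp only [auxEnc, List.cons_append, List.cons.injEq, true_and] at h
      rw [List.append_assoc, List.append_assoc] at h
      obtain ⟨h1, h2⟩ := ihl l' _ _ h
      obtain ⟨h3, h4⟩ := ihr r' _ _ h2
      exact ⟨by rw [h1, h3], h4⟩

lemma aux_enc_len (B : BinTree) : (auxEnc B).length = 2 * B.size + 1 := by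
  induction B with
  | nil => rfl
  | node l r ihl ihr => simp [auxEnc, BinTree.size, ihl, ihr]; omega

lemma aux_finite_tree (m : ℕ) (P : BinTree → Prop) (hP : ∀ B, P B → B.size = m) :
    Finite {B : BinTree // P B} := by
  haveI := aux_finite_list (2 * m + 1) (fun l => l.length = 2 * m + 1) (fun l h => h)
  refine Finite.of_injective
    (fun x => (⟨auxEnc x.1, by rw [aux_enc_len, hP _ x.2]⟩ :
      {l : List Bool // l.length = 2 * m + 1})) ?_
  rintro ⟨B₁, h₁⟩ ⟨B₂, h₂⟩ h
  have h3 : auxEnc B₁ ++ [] = auxEnc B₂ ++ [] := by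
    simpa using congrArg Subtype.val h
  exact Subtype.ext (aux_enc_inj B₁ B₂ [] [] h3).1

end Aux3
section Aux4
open List

lemma aux_tn_ge_rep (g : ℕ) (ζ : List Bool) :
    g ≤ trailingNorth (ζ ++ List.replicate g true) := by
  induction g with
  | zero => simp
  | succ g ih =>
    rw [List.replicate_succ', ← List.append_assoc, aux_tn_append_true]
    omega

lemma aux_eraseIdx (ζ l : List Bool) (b : Bool) :
    (ζ ++ b :: l).eraseIdx ζ.length = ζ ++ l := by
  induction ζ with
  | nil => simp [List.eraseIdx]
  | cons a ζ ih => simp [List.eraseIdx, ih]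

lemma aux_wb_count_false {ω η : List Bool} (h : weaklyBelow ω η) :
    η.count false = ω.count false := by
  obtain ⟨hlen, hcnt, -⟩ := h
  have h1 := aux_count_add η
  have h2 := aux_count_add ω
  omega

lemma aux_cp_decomp {u' η : List Bool} {g : ℕ} (hb : weaklyBelow (u' ++ [false]) η)
    (ht : trailingNorth η = g) :
    ∃ ζ, η = ζ ++ false :: List.replicate g true := by
  have hcf : η.count false = u'.count false + 1 := by
    have := aux_wb_count_false hb
    simpa [List.count_append] using this
  have hlt : g < η.length := by
    rcases lt_or_ge g η.length with h | h
    · exact h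
    · exfalso
      have hle := aux_tn_le_length η
      obtain ⟨ζ, hζ⟩ := aux_tn_ge_decomp (le_of_eq ht.symm)
      have hζl : ζ.length = 0 := by
        have := congrArg List.length hζ
        simp at this; omega
    
      rw [List.length_eq_zero_iff.mp hζl, List.nil_append] at hζ
      rw [hζ] at hcf
      rw [List.count_replicate] at hcf
      simp at hcf
  exact aux_tn_decomp ht hlt

/-! ### cardinality functions -/

noncomputable def cT (u : List Bool) (F G : ℕ) : ℕ :=
  Nat.card {B : BinTree // B.size = u.length + 1 ∧ B.canopy = u ∧
    B.leftBranchLen = F ∧ B.rightBranchLen = G}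

noncomputable def cTge (u : List Bool) (F G : ℕ) : ℕ :=
  Nat.card {B : BinTree // B.size = u.length + 1 ∧ B.canopy = u ∧
    B.leftBranchLen = F ∧ G ≤ B.rightBranchLen}

noncomputable def cP (u : List Bool) (f g : ℕ) : ℕ :=
  Nat.card {η : List Bool // weaklyBelow u η ∧ contacts u η = f ∧ trailingNorth η = g}

noncomputable def cPge (u : List Bool) (f g : ℕ) : ℕ :=
  Nat.card {η : List Bool // weaklyBelow u η ∧ contacts u η = f ∧ g ≤ trailingNorth η}

lemma split_T (u : List Bool) (F G : ℕ) : cTge u F G = cT u F G + cTge u F (G + 1) := by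
  haveI := aux_finite_tree (u.length + 1)
    (fun B => (B.size = u.length + 1 ∧ B.canopy = u ∧ B.leftBranchLen = F) ∧
      B.rightBranchLen = G) (fun B h => h.1.1)
  haveI := aux_finite_tree (u.length + 1)
    (fun B => (B.size = u.length + 1 ∧ B.canopy = u ∧ B.leftBranchLen = F) ∧
      G + 1 ≤ B.rightBranchLen) (fun B h => h.1.1)
  have e0 : cTge u F G = Nat.card {B : BinTree //
      (B.size = u.length + 1 ∧ B.canopy = u ∧ B.leftBranchLen = F) ∧
        G ≤ B.rightBranchLen} :=
    Nat.card_congr (Equiv.subtypeEquivRight (fun B => by tauto))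
  have e1 : cT u F G = Nat.card {B : BinTree //
      (B.size = u.length + 1 ∧ B.canopy = u ∧ B.leftBranchLen = F) ∧
        B.rightBranchLen = G} :=
    Nat.card_congr (Equiv.subtypeEquivRight (fun B => by tauto))
  have e2 : cTge u F (G + 1) = Nat.card {B : BinTree //
      (B.size = u.length + 1 ∧ B.canopy = u ∧ B.leftBranchLen = F) ∧
        G + 1 ≤ B.rightBranchLen} :=
    Nat.card_congr (Equiv.subtypeEquivRight (fun B => by tauto))
  rw [e0, e1, e2]
  exact aux_card_split _ _ G

lemma split_P (u : List Bool) (f g : ℕ) : cPge u f g = cP u f g + cPge u f (g + 1) := by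
  haveI := aux_finite_list u.length
    (fun η => (weaklyBelow u η ∧ contacts u η = f) ∧ trailingNorth η = g)
    (fun η h => h.1.1.1)
  haveI := aux_finite_list u.length
    (fun η => (weaklyBelow u η ∧ contacts u η = f) ∧ g + 1 ≤ trailingNorth η)
    (fun η h => h.1.1.1)
  have e0 : cPge u f g = Nat.card {η : List Bool //
      (weaklyBelow u η ∧ contacts u η = f) ∧ g ≤ trailingNorth η} :=
    Nat.card_congr (Equiv.subtypeEquivRight (fun η => by tauto))
  have e1 : cP u f g = Nat.card {η : List Bool //
      (weaklyBelow u η ∧ contacts u η = f) ∧ trailingNorth η = g} :=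
    Nat.card_congr (Equiv.subtypeEquivRight (fun η => by tauto))
  have e2 : cPge u f (g + 1) = Nat.card {η : List Bool //
      (weaklyBelow u η ∧ contacts u η = f) ∧ g + 1 ≤ trailingNorth η} :=
    Nat.card_congr (Equiv.subtypeEquivRight (fun η => by tauto))
  rw [e0, e1, e2]
  exact aux_card_split _ _ g

lemma cTge_vanish (u : List Bool) (F G : ℕ) (h : u.length + 2 ≤ G) : cTge u F G = 0 := by
  have : IsEmpty {B : BinTree // B.size = u.length + 1 ∧ B.canopy = u ∧
      B.leftBranchLen = F ∧ G ≤ B.rightBranchLen} := by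
    refine ⟨fun x => ?_⟩
    obtain ⟨B, hs, -, -, hr⟩ := x
    have := aux_rbl_le_size B
    omega
  exact Nat.card_of_isEmpty

lemma cPge_vanish (u : List Bool) (f g : ℕ) (h : u.length + 1 ≤ g) : cPge u f g = 0 := by
  have : IsEmpty {η : List Bool // weaklyBelow u η ∧ contacts u η = f ∧
      g ≤ trailingNorth η} := by
    refine ⟨fun x => ?_⟩
    obtain ⟨η, hb, -, hr⟩ := x
    have h1 := aux_tn_le_length η
    have h2 := hb.1
    omega
  exact Nat.card_of_isEmpty

lemma cT_rbl_zero (u : List Bool) (F : ℕ) : cT u F 0 = 0 := by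
  have : IsEmpty {B : BinTree // B.size = u.length + 1 ∧ B.canopy = u ∧
      B.leftBranchLen = F ∧ B.rightBranchLen = 0} := by
    refine ⟨fun x => ?_⟩
    obtain ⟨B, hs, -, -, hr⟩ := x
    rw [aux_rbl_eq_zero.mp hr] at hs
    simp [BinTree.size] at hs
  exact Nat.card_of_isEmpty

lemma cTge_lbl_zero (u : List Bool) (G : ℕ) : cTge u 0 G = 0 := by
  have : IsEmpty {B : BinTree // B.size = u.length + 1 ∧ B.canopy = u ∧
      B.leftBranchLen = 0 ∧ G ≤ B.rightBranchLen} := by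
    refine ⟨fun x => ?_⟩
    obtain ⟨B, hs, -, hl, -⟩ := x
    rw [aux_lbl_eq_zero.mp hl] at hs
    simp [BinTree.size] at hs
  exact Nat.card_of_isEmpty

lemma aux_ge (u : List Bool) (h : ∀ f g, cT u (f+1) (g+1) = cP u f g) :
    ∀ f g, cTge u (f+1) (g+1) = cPge u f g := by
  have key : ∀ d f g, u.length + 1 ≤ g + d → cTge u (f+1) (g+1) = cPge u f g := by
    intro d
    induction d with
    | zero =>
      intro f g hg
      rw [cTge_vanish _ _ _ (by omega), cPge_vanish _ _ _ (by omega)]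
    | succ d ihd =>
      intro f g hg
      rw [split_T, split_P, h f g, ihd f (g+1) (by omega)]
  intro f g
  exact key (u.length + 1) f g (by omega)

end Aux4
section Aux5
open List

lemma aux_idx (ζ : List Bool) (g : ℕ) :
    (ζ ++ false :: List.replicate g true).length - g - 1 = ζ.length := by
  simp; omega

lemma treeTrue (u' : List Bool) (F G : ℕ) :
    cT u' F G = cT (u' ++ [true]) F (G + 1) := by
  refine aux_card_bij' auxAddR ?_ ?_ ?_
  · rintro B' ⟨hs, hc, hl, hr⟩
    have hne : B' ≠ .nil := fun h => by rw [h] at hs; simp [BinTree.size] at hs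
    refine ⟨?_, ?_, ?_, ?_⟩
    · rw [aux_size_addR, hs]; simp
    · rw [aux_canopy_addR hne, hc]
    · rw [aux_lbl_addR hne, hl]
    · rw [aux_rbl_addR, hr]
  · intro a₁ a₂ _ _ h
    have h2 := congrArg auxRemR h
    rwa [aux_remR_addR, aux_remR_addR] at h2
  · rintro B ⟨hs, hc, hl, hr⟩
    simp only [List.length_append, List.length_singleton] at hs
    have hne : B ≠ .nil := fun h => by rw [h] at hs; simp [BinTree.size] at hs
    have hK := aux_K1 hne u' hc
    have hsr := aux_size_remR hne
    have hne' : auxRemR B ≠ .nil := by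
      intro h0
      rw [h0] at hsr
      simp [BinTree.size] at hsr
      omega
    refine ⟨auxRemR B, ⟨by omega, ?_, ?_, ?_⟩, hK⟩
    · have h2 := aux_canopy_addR hne'
      rw [hK, hc] at h2
      exact (List.append_cancel_right h2).symm
    · have h2 := aux_lbl_addR hne'
      rw [hK] at h2
      rw [← h2]; exact hl
    · have h2 := aux_rbl_addR (auxRemR B)
      rw [hK] at h2
      omega

lemma pathTrue (u' : List Bool) (f G : ℕ) :
    cP u' f G = cP (u' ++ [true]) f (G + 1) := by
  refine aux_card_bij' (fun η => η ++ [true]) ?_ ?_ ?_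
  · rintro η' ⟨hb, hc, ht⟩
    exact ⟨aux_wb_true.mpr hb, by rw [aux_contacts_true, hc],
      by rw [aux_tn_append_true, ht]⟩
  · intro a₁ a₂ _ _ h
    exact List.append_cancel_right h
  · rintro η ⟨hb, hc, ht⟩
    obtain ⟨η', rfl⟩ := aux_tn_pos (by omega : 1 ≤ trailingNorth η)
    rw [aux_tn_append_true] at ht
    exact ⟨η', ⟨aux_wb_true.mp hb, by rwa [aux_contacts_true] at hc, by omega⟩, rfl⟩

lemma treeFalse (u' : List Bool) (F g : ℕ) :
    cTge u' F (g + 1) = cT (u' ++ [false]) (F + if g = 0 then 1 else 0) (g + 1) := by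
  refine aux_card_bij' (fun B' => auxIns B' g) ?_ ?_ ?_
  · rintro B' ⟨hs, hc, hl, hr⟩
    have hne : B' ≠ .nil := fun h => by rw [h] at hs; simp [BinTree.size] at hs
    refine ⟨?_, ?_, ?_, ?_⟩
    · rw [aux_size_ins, hs]; simp
    · rw [BinTree.canopy, aux_cf_ins (by omega : g < B'.rightBranchLen),
        List.dropLast_concat, aux_cf_last hne, hc]
    · rw [aux_lbl_ins (by omega : g ≤ B'.rightBranchLen), hl]
    · rw [aux_rbl_ins (by omega : g ≤ B'.rightBranchLen)]
  · intro a₁ a₂ _ _ h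
    have h2 := congrArg auxRemR h
    rwa [aux_remR_ins, aux_remR_ins] at h2
  · rintro B ⟨hs, hc, hl, hr⟩
    simp only [List.length_append, List.length_singleton] at hs
    have hne : B ≠ .nil := fun h => by rw [h] at hs; simp [BinTree.size] at hs
    obtain ⟨hK, hge⟩ := aux_K2 hne u' hc
    rw [hr] at hK hge
    simp only [Nat.add_sub_cancel] at hK
    have hne' : auxRemR B ≠ .nil := by
      intro h0
      rw [h0] at hge
      simp [BinTree.rightBranchLen] at hge
    have hsr := aux_size_remR hne
    refine ⟨auxRemR B, ⟨by omega, ?_, ?_, by omega⟩, hK⟩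
    · have h2 : (auxIns (auxRemR B) g).canopyFull =
          (auxRemR B).canopyFull ++ [false] := aux_cf_ins (by omega)
      rw [hK, aux_cf_last hne, hc] at h2
      have h3 := List.append_cancel_right h2
      rw [BinTree.canopy, ← h3, List.dropLast_concat]
    · have h2 := aux_lbl_ins (show g ≤ (auxRemR B).rightBranchLen by omega)
      rw [hK] at h2
      omega

lemma pathFalse (u' : List Bool) (F g : ℕ) :
    cP (u' ++ [false]) (F + if g = 0 then 1 else 0) g = cPge u' F g := by
  refine aux_card_bij' (fun η => η.eraseIdx (η.length - g - 1)) ?_ ?_ ?_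
  · rintro η ⟨hb, hc, ht⟩
    obtain ⟨ζ, rfl⟩ := aux_cp_decomp hb ht
    rw [aux_idx, aux_eraseIdx]
    have hcf : ζ.count false = u'.count false := by
      have h1 := aux_wb_count_false hb
      simp [List.count_append, List.count_cons, List.count_replicate] at h1
      omega
    have hct : ζ.count true + g = u'.count true := by
      have h1 := hb.2.1
      simp [List.count_append, List.count_cons, List.count_replicate] at h1
      omega
    rw [aux_contacts_false g hcf] at hc
    have heq : (if u'.count true = ζ.count true then 1 else 0) =
        (if g = 0 then 1 else 0) := by
      by_cases hg : g = 0
      · rw [if_pos hg, if_pos (by omega)]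
      · rw [if_neg hg, if_neg (by omega)]
    exact ⟨aux_wb_false.mp hb, by omega, aux_tn_ge_rep g ζ⟩
  · intro η₁ η₂ h₁ h₂ heq
    obtain ⟨ζ₁, rfl⟩ := aux_cp_decomp h₁.1 h₁.2.2
    obtain ⟨ζ₂, rfl⟩ := aux_cp_decomp h₂.1 h₂.2.2
    rw [aux_idx, aux_eraseIdx, aux_idx, aux_eraseIdx] at heq
    rw [List.append_cancel_right heq]
  · rintro η' ⟨hb, hc, ht⟩
    obtain ⟨ζ, rfl⟩ := aux_tn_ge_decomp ht
    have hcf : ζ.count false = u'.count false := by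
      have h1 := aux_wb_count_false hb
      simp [List.count_append, List.count_replicate] at h1
      omega
    have hct : ζ.count true + g = u'.count true := by
      have h1 := hb.2.1
      simp [List.count_append, List.count_replicate] at h1
      omega
    have heq : (if u'.count true = ζ.count true then 1 else 0) =
        (if g = 0 then 1 else 0) := by
      by_cases hg : g = 0
      · rw [if_pos hg, if_pos (by omega)]
      · rw [if_neg hg, if_neg (by omega)]
    refine ⟨ζ ++ false :: List.replicate g true, ⟨aux_wb_false.mpr hb, ?_,
      aux_tn_ztail ζ g⟩, by rw [aux_idx, aux_eraseIdx]⟩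
    rw [aux_contacts_false g hcf, hc]
    omega

lemma cP_true_zero (u' : List Bool) (f : ℕ) : cP (u' ++ [true]) f 0 = 0 := by
  have hie : IsEmpty {η : List Bool // weaklyBelow (u' ++ [true]) η ∧
      contacts (u' ++ [true]) η = f ∧ trailingNorth η = 0} := by
    refine ⟨fun x => ?_⟩
    obtain ⟨η, hb, hc, ht⟩ := x
    have hlen : η.length = u'.length + 1 := by
      have := hb.1; simpa using this
    obtain ⟨ζ, hζ⟩ := aux_tn_decomp ht (by omega : 0 < η.length)
    simp only [List.replicate_zero] at hζ
    subst hζ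
    have hζl : ζ.length = u'.length := by simpa using hlen
    have hcnt : ζ.count true = u'.count true + 1 := by
      have := hb.2.1
      simp [List.count_append, List.count_cons] at this
      omega
    have hpre := hb.2.2 u'.length
    rw [← hζl, List.take_left, hζl, List.take_left] at hpre
    omega
  exact Nat.card_of_isEmpty

lemma cP_false00 (u' : List Bool) : cP (u' ++ [false]) 0 0 = 0 := by
  have hie : IsEmpty {η : List Bool // weaklyBelow (u' ++ [false]) η ∧
      contacts (u' ++ [false]) η = 0 ∧ trailingNorth η = 0} := by
    refine ⟨fun x => ?_⟩
    obtain ⟨η, hb, hc, ht⟩ := x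
    obtain ⟨ζ, rfl⟩ := aux_cp_decomp hb ht
    have hcf : ζ.count false = u'.count false := by
      have h1 := aux_wb_count_false hb
      simp [List.count_append, List.count_cons, List.count_replicate] at h1
      omega
    have hct : ζ.count true = u'.count true := by
      have h1 := hb.2.1
      simp [List.count_append, List.count_cons, List.count_replicate] at h1
      omega
    rw [aux_contacts_false 0 hcf, if_pos hct.symm] at hc
    omega
  exact Nat.card_of_isEmpty

lemma aux_size_one {B : BinTree} (h : B.size = 1) : B = .node .nil .nil := by
  cases B with
  | nil => simp [BinTree.size] at h
  | node l r =>
    simp only [BinTree.size] at h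
    rw [aux_size_eq_zero.mp (show l.size = 0 by omega),
      aux_size_eq_zero.mp (show r.size = 0 by omega)]

lemma cT_nil (f g : ℕ) : cT [] (f + 1) (g + 1) = if f = 0 ∧ g = 0 then 1 else 0 := by
  split_ifs with h
  · obtain ⟨rfl, rfl⟩ := h
    haveI : Nonempty {B : BinTree // B.size = ([] : List Bool).length + 1 ∧ B.canopy = ([] : List Bool) ∧
        B.leftBranchLen = 0 + 1 ∧ B.rightBranchLen = 0 + 1} :=
      ⟨⟨.node .nil .nil, by
        refine ⟨by simp [BinTree.size], by simp [BinTree.canopy, BinTree.canopyFull], ?_, ?_⟩ <;>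
          simp [BinTree.leftBranchLen, BinTree.rightBranchLen]⟩⟩
    haveI : Subsingleton {B : BinTree // B.size = ([] : List Bool).length + 1 ∧ B.canopy = ([] : List Bool) ∧
        B.leftBranchLen = 0 + 1 ∧ B.rightBranchLen = 0 + 1} := by
      refine ⟨fun x y => ?_⟩
      obtain ⟨B₁, h₁⟩ := x
      obtain ⟨B₂, h₂⟩ := y
      have e₁ := aux_size_one (by simpa using h₁.1)
      have e₂ := aux_size_one (by simpa using h₂.1)
      subst e₁; subst e₂; rfl
    exact Nat.card_unique
  · have hie : IsEmpty {B : BinTree // B.size = ([] : List Bool).length + 1 ∧ B.canopy = ([] : List Bool) ∧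
        B.leftBranchLen = f + 1 ∧ B.rightBranchLen = g + 1} := by
      refine ⟨fun x => ?_⟩
      obtain ⟨B, hs, hcan, hl, hr⟩ := x
      have e := aux_size_one (by simpa using hs)
      subst e
      simp [BinTree.leftBranchLen, BinTree.rightBranchLen] at hl hr
      exact h ⟨by omega, by omega⟩
    exact Nat.card_of_isEmpty

lemma cP_nil (f g : ℕ) : cP [] f g = if f = 0 ∧ g = 0 then 1 else 0 := by
  have hwb : weaklyBelow [] ([] : List Bool) := ⟨rfl, rfl, fun t => le_refl _⟩
  have hco : contacts [] ([] : List Bool) = 0 := rfl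
  have htn : trailingNorth ([] : List Bool) = 0 := rfl
  split_ifs with h
  · obtain ⟨rfl, rfl⟩ := h
    haveI : Nonempty {η : List Bool // weaklyBelow [] η ∧ contacts [] η = 0 ∧
        trailingNorth η = 0} := ⟨⟨[], hwb, hco, htn⟩⟩
    haveI : Subsingleton {η : List Bool // weaklyBelow [] η ∧ contacts [] η = 0 ∧
        trailingNorth η = 0} := by
      refine ⟨fun x y => ?_⟩
      obtain ⟨η₁, h₁⟩ := x
      obtain ⟨η₂, h₂⟩ := y
      have e₁ : η₁ = [] := List.length_eq_zero_iff.mp h₁.1.1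
      have e₂ : η₂ = [] := List.length_eq_zero_iff.mp h₂.1.1
      subst e₁; subst e₂; rfl
    exact Nat.card_unique
  · have hie : IsEmpty {η : List Bool // weaklyBelow [] η ∧ contacts [] η = f ∧
        trailingNorth η = g} := by
      refine ⟨fun x => ?_⟩
      obtain ⟨η, hb, hcη, htη⟩ := x
      have e : η = [] := List.length_eq_zero_iff.mp hb.1
      subst e
      exact h ⟨by rw [← hcη, hco], by rw [← htη, htn]⟩
    exact Nat.card_of_isEmpty

lemma aux_main : ∀ (u : List Bool) (f g : ℕ), cT u (f + 1) (g + 1) = cP u f g := by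
  intro u
  induction u using List.reverseRecOn with
  | nil => intro f g; rw [cT_nil, cP_nil]
  | append_singleton u' x ih =>
    intro f g
    cases x with
    | true =>
      rw [← treeTrue u' (f + 1) g]
      cases g with
      | zero => rw [cT_rbl_zero, cP_true_zero]
      | succ g₀ => rw [ih f g₀, pathTrue]
    | false =>
      have hge := aux_ge u' ih
      cases g with
      | zero =>
        cases f with
        | zero =>
          have h1 := treeFalse u' 0 0
          norm_num at h1
          rw [← h1, cTge_lbl_zero, cP_false00]
        | succ f₀ =>
          have h1 := treeFalse u' (f₀ + 1) 0
          norm_num at h1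
          have h2 := pathFalse u' f₀ 0
          norm_num at h2
          rw [← h1, hge f₀ 0, ← h2]
      | succ g₀ =>
        have h1 := treeFalse u' (f + 1) (g₀ + 1)
        norm_num at h1
        have h2 := pathFalse u' f (g₀ + 1)
        norm_num at h2
        rw [← h1, hge f (g₀ + 1), h2]

end Aux5
/-- For every integer `n ≥ 1`, every word `u` of length `n` over
`{a, b}`, and all integers `f ≥ 0` and `g ≥ 0`, the number of binary trees with
`n + 1` vertices with canopy `u` whose left branch has length `f + 1` and whose
right branch has length `g + 1` equals the number of lattice paths `η` weakly
below `ω_u` that have exactly `f` horizontal contacts with `ω_u` and exactly `g`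
trailing north steps. -/
theorem card_binTree_refined_eq_card_paths_refined
    (n : ℕ) (hn : 1 ≤ n) (u : List Bool) (hu : u.length = n) (f g : ℕ) :
    Nat.card {B : BinTree //
        B.size = n + 1 ∧ B.canopy = u ∧
        B.leftBranchLen = f + 1 ∧ B.rightBranchLen = g + 1} =
      Nat.card {η : List Bool //
        weaklyBelow u η ∧ contacts u η = f ∧ trailingNorth η = g} := by
  subst hu
  exact aux_main u f g
end

section
/- Let B be a nonempty binary tree and let m be the number of left edges of B (edges from a parent to its left child). Order the left edges as e_1, …, e_m so that their parent vertices are increasing in symmetric order, and let ρ_i be the right height of the parent of e_i. The vertices of B having no right child, excluding the last vertex in symmetric order, are exactly m in number; list them in symmetric order as g_1, …, g_m, and let h_i be the number of vertices of B that precede g_i in symmetric order and have a right child. Then ρ_i ≤ h_i for all 1 ≤ i ≤ m, and the sequence h_1 − ρ_1, h_2 − ρ_2, …, h_m − ρ_m is weakly increasing. -/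
namespace Stmt10Aux

abbrev V := Bool × Bool × ℕ

/-- Step relation along the inorder list: the next vertex has a left child iff
the current one has no right child; if the current vertex has a right child the
right height increases by one, otherwise it does not increase. -/
def step (u v : V) : Prop :=
  v.1 = !u.2.1 ∧ (u.2.1 = true → v.2.2 = u.2.2 + 1) ∧ (u.2.1 = false → v.2.2 ≤ u.2.2)

/-- Counter values at the vertices having a left child. -/
def hs2 : List V → ℕ → List ℕ
  | [], _ => []
  | v :: rest, c => (if v.1 then [c] else []) ++ hs2 rest (c + if v.2.1 then 1 else 0)

/-- Number of vertices having a right child. -/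
def countB : List V → ℕ
  | [] => 0
  | v :: rest => (if v.2.1 then 1 else 0) + countB rest

/-- `Rel d A H`: the two lists have equal lengths, are pointwise `A ≤ H`,
differences `H - A` are at least `d` and weakly increasing. -/
inductive Rel : ℕ → List ℕ → List ℕ → Prop
  | nil (d : ℕ) : Rel d [] []
  | cons (d ρ h : ℕ) (A H : List ℕ) (h1 : ρ + d ≤ h) (h2 : Rel (h - ρ) A H) :
      Rel d (ρ :: A) (h :: H)

lemma rel_length {d : ℕ} {A H : List ℕ} (h : Rel d A H) : A.length = H.length := by
  induction h <;> simp [*]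

lemma rel_getD {d : ℕ} {A H : List ℕ} (h : Rel d A H) :
    ∀ i, i < A.length → A.getD i 0 + d ≤ H.getD i 0 := by
  induction h with
  | nil => simp
  | cons d ρ hh A H h1 h2 ih =>
    intro i hi
    cases i with
    | zero => simpa using h1
    | succ i =>
      have := ih i (by simpa using hi)
      simp only [List.getD_cons_succ] at this ⊢
      omega

lemma rel_mono {d : ℕ} {A H : List ℕ} (h : Rel d A H) :
    ∀ i j, i ≤ j → j < A.length →
      H.getD i 0 - A.getD i 0 ≤ H.getD j 0 - A.getD j 0 := by
  induction h with
  | nil => intro i j _ hj; simp at hj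
  | cons d ρ hh A H h1 h2 ih =>
    intro i j hij hj
    cases i with
    | zero =>
      cases j with
      | zero => exact le_rfl
      | succ j =>
        have hlen : j < A.length := by simpa using hj
        have := rel_getD h2 j hlen
        simp only [List.getD_cons_zero, List.getD_cons_succ]
        omega
    | succ i =>
      cases j with
      | zero => omega
      | succ j =>
        simp only [List.getD_cons_succ]
        exact ih i j (by omega) (by simpa using hj)

lemma core : ∀ (L : List V) (c d : ℕ), List.Chain' step L →
    (∀ x ∈ L.head?, x.2.2 + d ≤ c) →
    Rel d ((L.filter (fun v => v.1)).map (fun v => v.2.2)) (hs2 L c)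
  | [], c, d, _, _ => by simpa [hs2] using Rel.nil d
  | ⟨a, b, r⟩ :: rest, c, d, hc, hinv => by
    unfold List.Chain' at hc
    rw [List.isChain_cons] at hc
    have hr : r + d ≤ c := by simpa using hinv ⟨a, b, r⟩ rfl
    cases a with
    | true =>
      have hd : d ≤ c - r := by omega
      simp only [List.filter_cons, List.map_cons, hs2]
      norm_num
      refine Rel.cons d r c _ _ (by omega) ?_
      apply core rest _ (c - r) hc.2
      intro y hy
      obtain ⟨_, hb1, hb2⟩ := hc.1 y hy
      cases b with
      | true => have := hb1 rfl; simp at this ⊢; omega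
      | false => have := hb2 rfl; simp at this ⊢; omega
    | false =>
      simp only [List.filter_cons, hs2]
      norm_num
      apply core rest _ d hc.2
      intro y hy
      obtain ⟨_, hb1, hb2⟩ := hc.1 y hy
      cases b with
      | true => have := hb1 rfl; simp at this ⊢; omega
      | false => have := hb2 rfl; simp at this ⊢; omega

lemma hsAux_cons_true (v : V) (rest : List V) (c : ℕ) (h : v.2.1 = true) :
    hsAux (v :: rest) c = hsAux rest (c + 1) := by simp [hsAux, h]

lemma hsAux_cons_false (v : V) (rest : List V) (c : ℕ) (h : v.2.1 = false) :
    hsAux (v :: rest) c = c :: hsAux rest c := by simp [hsAux, h]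

lemma hs2_cons (v : V) (rest : List V) (c : ℕ) :
    hs2 (v :: rest) c = (if v.1 then [c] else []) ++ hs2 rest (c + if v.2.1 then 1 else 0) :=
  rfl

lemma countB_cons (v : V) (rest : List V) :
    countB (v :: rest) = (if v.2.1 then 1 else 0) + countB rest := rfl

lemma hsAux_eq : ∀ (L : List V) (v : V) (c : ℕ), List.Chain' step (v :: L) →
    (∀ x ∈ (v :: L).getLast?, x.2.1 = false) →
    (if v.1 = true then c :: hsAux (v :: L) c else hsAux (v :: L) c)
      = hs2 (v :: L) c ++ [c + countB (v :: L)] := by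
  intro L
  induction L with
  | nil =>
    intro v c _ hlast
    have hv : v.2.1 = false := hlast v (by simp)
    cases hv1 : v.1 <;> simp [hsAux, hs2, countB, hv, hv1]
  | cons w L' ih =>
    intro v c hc hlast
    unfold List.Chain' at hc
    rw [List.isChain_cons_cons] at hc
    have hw1 : w.1 = !v.2.1 := hc.1.1
    have hlast' : ∀ x ∈ (w :: L').getLast?, x.2.1 = false := by
      intro x hx; exact hlast x (by rwa [List.getLast?_cons_cons])
    cases hv : v.2.1 with
    | true =>
      have hwf : w.1 = false := by simp [hw1, hv]
      have key := ih w (c + 1) hc.2 hlast'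
      rw [hwf] at key
      rw [if_neg (by simp)] at key
      rw [hs2_cons, countB_cons, hv, hsAux_cons_true v _ c hv, key]
      cases hv1 : v.1 <;> simp [hv1, Nat.add_assoc]
    | false =>
      have hwt : w.1 = true := by simp [hw1, hv]
      have key := ih w c hc.2 hlast'
      rw [hwt] at key
      rw [if_pos rfl] at key
      rw [hs2_cons, countB_cons, hv, hsAux_cons_false v _ c hv]
      cases hv1 : v.1 <;> simp only [hv1, if_true, if_false, Bool.false_eq_true,
        key] <;> simp [Nat.add_assoc]

open BinTree

lemma inorderAux_ne_nil (B : BinTree) (hB : B ≠ .nil) (h : ℕ) : B.inorderAux h ≠ [] := by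
  cases B with
  | nil => exact absurd rfl hB
  | node l r => simp [BinTree.inorderAux]

lemma rh_ge (B : BinTree) (h : ℕ) : ∀ x ∈ B.inorderAux h, h ≤ x.2.2 := by
  induction B generalizing h with
  | nil => simp [BinTree.inorderAux]
  | node l r ihl ihr =>
    intro x hx
    simp only [BinTree.inorderAux, List.mem_append, List.mem_cons] at hx
    rcases hx with hx | rfl | hx
    · exact ihl h x hx
    · simp
    · exact le_trans (Nat.le_succ h) (ihr (h + 1) x hx)

lemma head_spec (B : BinTree) (h : ℕ) :
    ∀ x ∈ (B.inorderAux h).head?, x.1 = false ∧ x.2.2 = h := by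
  induction B generalizing h with
  | nil => simp [BinTree.inorderAux]
  | node l r ihl ihr =>
    intro x hx
    by_cases hl : l = BinTree.nil
    · subst hl
      simp only [BinTree.inorderAux, List.nil_append, List.head?_cons,
        Option.mem_def, Option.some.injEq] at hx
      subst hx; simp
    · have hne := inorderAux_ne_nil l hl h
      rw [BinTree.inorderAux, List.head?_append_of_ne_nil _ hne] at hx
      exact ihl h x hx

lemma last_spec (B : BinTree) (h : ℕ) :
    ∀ x ∈ (B.inorderAux h).getLast?, x.2.1 = false := by
  induction B generalizing h with
  | nil => simp [BinTree.inorderAux]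
  | node l r ihl ihr =>
    intro x hx
    by_cases hr : r = BinTree.nil
    · subst hr
      rw [BinTree.inorderAux] at hx
      simp only [BinTree.inorderAux, List.getLast?_append_cons, List.getLast?_singleton,
        Option.mem_def, Option.some.injEq] at hx
      subst hx; simp
    · have hne := inorderAux_ne_nil r hr (h + 1)
      obtain ⟨y, M, hM⟩ := List.exists_cons_of_ne_nil hne
      rw [BinTree.inorderAux, List.getLast?_append_cons, hM, List.getLast?_cons_cons] at hx
      exact ihr (h + 1) x (by rw [hM]; exact hx)

lemma chain_inorder (B : BinTree) (h : ℕ) : List.Chain' step (B.inorderAux h) := by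
  induction B generalizing h with
  | nil => simp [BinTree.inorderAux, List.Chain']
  | node l r ihl ihr =>
    unfold List.Chain'
    rw [BinTree.inorderAux, List.isChain_append]
    refine ⟨ihl h, ?_, ?_⟩
    · rw [List.isChain_cons]
      refine ⟨?_, ihr (h + 1)⟩
      intro y hy
      have hrne : r ≠ BinTree.nil := by
        intro hr; subst hr; simp [BinTree.inorderAux] at hy
      obtain ⟨hy1, hy2⟩ := head_spec r (h + 1) y hy
      refine ⟨?_, ?_, ?_⟩ <;> simp [hy1, hy2, hrne]
    · intro x hx y hy
      have hlne : l ≠ BinTree.nil := by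
        intro hl; subst hl; simp [BinTree.inorderAux] at hx
      have hx2 : x.2.1 = false := last_spec l h x hx
      have hxr : h ≤ x.2.2 := by
        obtain ⟨hne, rfl⟩ := List.mem_getLast?_eq_getLast hx
        exact rh_ge l h _ (List.getLast_mem hne)
      simp only [List.head?_cons, Option.mem_def, Option.some.injEq] at hy
      subst hy
      refine ⟨?_, ?_, ?_⟩ <;> simp [hx2, hlne, hxr]

lemma filter_len (B : BinTree) (h : ℕ) :
    ((B.inorderAux h).filter (fun v => v.1)).length = B.leftEdgeCount := by
  induction B generalizing h with
  | nil => simp [BinTree.inorderAux, BinTree.leftEdgeCount]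
  | node l r ihl ihr =>
    simp only [BinTree.inorderAux, BinTree.leftEdgeCount, List.filter_append,
      List.filter_cons, List.length_append]
    by_cases hl : l = BinTree.nil <;>
      simp [hl, ihl, ihr, BinTree.inorderAux, BinTree.leftEdgeCount] <;> omega

end Stmt10Aux

/-- Let `B` be a nonempty binary tree and `m` its number of left
edges.  Order the left edges so that their parent vertices are increasing in
symmetric order and let `ρᵢ` be the right height of the parent of the `i`-th
left edge.  The vertices of `B` having no right child, excluding the last vertex
in symmetric order, are exactly `m` in number; let `hᵢ` be the number of
vertices of `B` preceding the `i`-th of them in symmetric order that have a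
right child.  Then `ρᵢ ≤ hᵢ` for all `i`, and the sequence `hᵢ - ρᵢ` is weakly
increasing. -/
theorem rho_le_h_and_monotone (B : BinTree) (hB : B ≠ BinTree.nil) :
    B.rhoList.length = B.leftEdgeCount ∧
    B.hList.length = B.leftEdgeCount ∧
    (∀ i, i < B.leftEdgeCount → B.rhoList.getD i 0 ≤ B.hList.getD i 0) ∧
    (∀ i j, i ≤ j → j < B.leftEdgeCount →
      B.hList.getD i 0 - B.rhoList.getD i 0 ≤ B.hList.getD j 0 - B.rhoList.getD j 0) := by
  classical
  open Stmt10Aux in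
  have hch := chain_inorder B 0
  obtain ⟨x, rest, hL⟩ : ∃ x rest, B.inorderAux 0 = x :: rest := by
    cases hE : B.inorderAux 0 with
    | nil => exact absurd hE (inorderAux_ne_nil B hB 0)
    | cons x rest => exact ⟨x, rest, rfl⟩
  have hx : x.1 = false ∧ x.2.2 = 0 := head_spec B 0 x (by rw [hL]; rfl)
  have hrel : Stmt10Aux.Rel 0 B.rhoList (hs2 (B.inorderAux 0) 0) := by
    apply core _ 0 0 hch
    intro y hy
    rw [hL] at hy
    simp only [List.head?_cons, Option.mem_def, Option.some.injEq] at hy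
    subst hy
    omega
  have hh : B.hList = hs2 (B.inorderAux 0) 0 := by
    have key := hsAux_eq rest x 0 (hL ▸ hch) (fun y hy => last_spec B 0 y (hL ▸ hy))
    rw [hx.1, if_neg (by simp)] at key
    show (hsAux B.inorder 0).dropLast = _
    rw [BinTree.inorder, hL, key]
    exact List.dropLast_concat
  have hlen1 : B.rhoList.length = B.leftEdgeCount := by
    show ((B.inorder.filter (fun v => v.1)).map (fun v => v.2.2)).length = _
    rw [List.length_map, BinTree.inorder]
    exact filter_len B 0
  have hlen2 : B.hList.length = B.leftEdgeCount := by
    rw [hh, ← rel_length hrel, hlen1]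
  refine ⟨hlen1, hlen2, ?_, ?_⟩
  · intro i hi
    have := rel_getD hrel i (by rw [hlen1]; exact hi)
    rw [hh]; omega
  · intro i j hij hj
    rw [hh]
    exact rel_mono hrel i j hij (by rw [hlen1]; exact hj)
end
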